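/- arXiv:1609.02928 — 5 statements merged into one kernel-verified Lean document; each statement's English description precedes it below -/
import Mathlib

section
/- Let X ⊆ ℝ² be a polytope with exactly n_v vertices (extreme points). Then there exists a finite set D ⊆ ℝ² of directions with |D| ≤ 3·n_v such that D determines X within the class of all polytopes in ℝ² having exactly n_v extreme points. (This is the determination content of the convergence of Algorithm 1 in the case where the upper bound n̄ on the number of vertices equals n_v: the algorithm terminates after at most 3n_v oracle calls with S_v = X_v.) -/
open RealInnerProductSpace

/-- Support function of a subset of `ℝⁿ`. -/
noncomputable def supp {n : ℕ} (X : Set (EuclideanSpace ℝ (Fin n)))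
    (d : EuclideanSpace ℝ (Fin n)) : ℝ :=
  sSup ((fun v => ⟪v, d⟫) '' X)

/-- `X` is a polytope: the convex hull of a nonempty finite set. -/
def IsPolytope {n : ℕ} (X : Set (EuclideanSpace ℝ (Fin n))) : Prop :=
  ∃ F : Finset (EuclideanSpace ℝ (Fin n)), F.Nonempty ∧ X = convexHull ℝ (F : Set _)

/-- The finite direction set `D` determines `X` within the class `𝒞`. -/
def Determines {n : ℕ} (𝒞 : Set (Set (EuclideanSpace ℝ (Fin n))))
    (D : Finset (EuclideanSpace ℝ (Fin n))) (X : Set (EuclideanSpace ℝ (Fin n))) : Prop :=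
  ∀ Y ∈ 𝒞, (∀ d ∈ D, supp Y d = supp X d) → Y = X

namespace Stmt2Aux

abbrev R2 := EuclideanSpace ℝ (Fin 2)

def cross (x y : R2) : ℝ := x 0 * y 1 - x 1 * y 0

lemma inner_two (x y : R2) : ⟪x, y⟫ = x 0 * y 0 + x 1 * y 1 := by
  simp [PiLp.inner_apply, Fin.sum_univ_two, RCLike.inner_apply, conj_trivial]; ring

noncomputable def rot (x : R2) : R2 := (WithLp.equiv 2 _).symm ![-(x 1), x 0]

lemma inner_rot (a x : R2) : ⟪rot a, x⟫ = cross a x := by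
  rw [inner_two]; show -(a 1) * x 0 + a 0 * x 1 = _; rw [cross]; ring

lemma inner_rot' (a x : R2) : ⟪x, rot a⟫ = cross a x := by
  rw [real_inner_comm]; exact inner_rot a x

@[simp] lemma sub_apply (x y : R2) (i : Fin 2) : (x - y) i = x i - y i := rfl
@[simp] lemma neg_apply (x : R2) (i : Fin 2) : (-x) i = -(x i) := rfl
@[simp] lemma smul_apply (c : ℝ) (x : R2) (i : Fin 2) : (c • x) i = c * x i := rfl
@[simp] lemma add_apply (x y : R2) (i : Fin 2) : (x + y) i = x i + y i := rfl
@[simp] lemma zero_apply (i : Fin 2) : (0 : R2) i = 0 := rfl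

lemma cross_self2 (x : R2) : cross x x = 0 := by rw [cross]; ring

lemma ext_two' {x y : R2} (h0 : x 0 = y 0) (h1 : x 1 = y 1) : x = y := by
  apply PiLp.ext; intro i
  fin_cases i <;> assumption

lemma inner_self_pos2 {u : R2} (hu : u ≠ 0) : 0 < ⟪u, u⟫ := by
  have h : u 0 ≠ 0 ∨ u 1 ≠ 0 := by
    by_contra hc
    push_neg at hc
    exact hu (ext_two' hc.1 hc.2)
  rw [inner_two]
  rcases h with h | h <;>
    nlinarith [mul_self_pos.2 h, mul_self_nonneg (u 0), mul_self_nonneg (u 1)]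
lemma cross_anti (x y : R2) : cross x y = - cross y x := by simp [cross]; ring
lemma cross_smul_left (c : ℝ) (x y : R2) : cross (c • x) y = c * cross x y := by
  simp [cross]; ring
lemma cross_smul_right (c : ℝ) (x y : R2) : cross x (c • y) = c * cross x y := by
  simp [cross]; ring
lemma cross_sub_right (x y z : R2) : cross x (y - z) = cross x y - cross x z := by
  simp [cross]; ring
lemma cross_neg_right (x y : R2) : cross x (-y) = - cross x y := by simp [cross]; ring
lemma cross_zero_right (x : R2) : cross x 0 = 0 := by simp [cross]

/-- transitivity of the angular order in an open half-plane -/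
lemma cross_trans {d u v w : R2} (hu : ⟪u, d⟫ < 0) (hv : ⟪v, d⟫ < 0) (hw : ⟪w, d⟫ < 0)
    (h1 : 0 ≤ cross u v) (h2 : 0 ≤ cross v w) : 0 ≤ cross u w := by
  rw [inner_two] at hu hv hw
  have key : cross v w * (u 0 * d 0 + u 1 * d 1) + cross u v * (w 0 * d 0 + w 1 * d 1)
      = cross u w * (v 0 * d 0 + v 1 * d 1) := by simp [cross]; ring
  nlinarith [mul_nonpos_of_nonneg_of_nonpos h2 hu.le, mul_nonpos_of_nonneg_of_nonpos h1 hw.le]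

/-- existence of an angular minimum among finitely many vectors in an open half-plane -/
lemma exists_min {α : Type*} (d : R2) (g : α → R2) (s : Finset α) (hs : s.Nonempty)
    (hd : ∀ x ∈ s, ⟪g x, d⟫ < 0) : ∃ m ∈ s, ∀ x ∈ s, 0 ≤ cross (g m) (g x) := by
  classical
  induction s using Finset.induction_on with
  | empty => exact absurd hs (by simp)
  | @insert a s ha ih =>
    by_cases hne : s.Nonempty
    · obtain ⟨m, hm, hmin⟩ := ih hne fun x hx => hd x (Finset.mem_insert_of_mem hx)
      by_cases hma : 0 ≤ cross (g m) (g a)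
      · refine ⟨m, Finset.mem_insert_of_mem hm, ?_⟩
        intro x hx
        rcases Finset.mem_insert.1 hx with rfl | hx
        · exact hma
        · exact hmin x hx
      · push_neg at hma
        have ham : 0 ≤ cross (g a) (g m) := by
          rw [cross_anti]; linarith
        refine ⟨a, Finset.mem_insert_self _ _, ?_⟩
        intro x hx
        rcases Finset.mem_insert.1 hx with rfl | hx
        · simp [cross_self2]
        · exact cross_trans (hd a (Finset.mem_insert_self _ _))
            (hd m (Finset.mem_insert_of_mem hm)) (hd x (Finset.mem_insert_of_mem hx))
            ham (hmin x hx)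
    · refine ⟨a, Finset.mem_insert_self _ _, ?_⟩
      intro x hx
      rcases Finset.mem_insert.1 hx with rfl | hx
      · simp [cross_self2]
      · exact absurd ⟨x, hx⟩ hne

noncomputable def refl2 (x : R2) : R2 := (WithLp.equiv 2 _).symm ![x 0, -(x 1)]

lemma inner_refl2 (x y : R2) : ⟪refl2 x, refl2 y⟫ = ⟪x, y⟫ := by
  rw [inner_two, inner_two]; show x 0 * y 0 + -(x 1) * -(y 1) = _; ring

lemma cross_refl2 (x y : R2) : cross (refl2 x) (refl2 y) = - cross x y := by
  show x 0 * -(y 1) - -(x 1) * y 0 = _; rw [cross]; ring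

lemma exists_max {α : Type*} (d : R2) (g : α → R2) (s : Finset α) (hs : s.Nonempty)
    (hd : ∀ x ∈ s, ⟪g x, d⟫ < 0) : ∃ m ∈ s, ∀ x ∈ s, cross (g m) (g x) ≤ 0 := by
  obtain ⟨m, hm, hmin⟩ := exists_min (refl2 d) (fun a => refl2 (g a)) s hs
    (fun x hx => by rw [inner_refl2]; exact hd x hx)
  refine ⟨m, hm, fun x hx => ?_⟩
  have := hmin x hx
  rw [cross_refl2] at this; linarith

lemma ext_two {x y : R2} (h0 : x 0 = y 0) (h1 : x 1 = y 1) : x = y := by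
  apply PiLp.ext; intro i
  fin_cases i <;> assumption

lemma collinear_of_cross_eq_zero {u v : R2} (h : cross u v = 0) (hu : u ≠ 0) :
    ∃ l : ℝ, v = l • u := by
  have hu' : u 0 ≠ 0 ∨ u 1 ≠ 0 := by
    by_contra hc
    push_neg at hc
    exact hu (ext_two hc.1 hc.2)
  rw [cross] at h
  rcases hu' with h0 | h1
  · refine ⟨v 0 / u 0, ext_two ?_ ?_⟩
    · show v 0 = v 0 / u 0 * u 0; field_simp
    · show v 1 = v 0 / u 0 * u 1; field_simp; nlinarith
  · refine ⟨v 1 / u 1, ext_two ?_ ?_⟩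
    · show v 0 = v 1 / u 1 * u 0; field_simp; nlinarith
    · show v 1 = v 1 / u 1 * u 1; field_simp

lemma collinear_pos {u v d : R2} (h : cross u v = 0) (hud : ⟪u, d⟫ < 0) (hvd : ⟪v, d⟫ < 0) :
    ∃ l : ℝ, 0 < l ∧ v = l • u := by
  have hu : u ≠ 0 := by rintro rfl; rw [inner_zero_left] at hud; exact lt_irrefl _ hud
  obtain ⟨l, rfl⟩ := collinear_of_cross_eq_zero h hu
  rw [real_inner_smul_left] at hvd
  exact ⟨l, by nlinarith, rfl⟩

/-- no three collinear extreme-ish points -/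
lemma no_three {X : Set R2} {u q r : R2} (hu : u ∈ X)
    (hq : q ∈ Set.extremePoints ℝ X) (hr : r ∈ Set.extremePoints ℝ X)
    (hqu : q ≠ u) (hqr : q ≠ r) {l : ℝ} (hl : 0 < l) (heq : r - u = l • (q - u)) : False := by
  rcases lt_trichotomy l 1 with h1 | h1 | h1
  · have : r ∈ openSegment ℝ u q := by
      refine ⟨1 - l, l, by linarith, hl, by ring, ?_⟩
      have : r = u + l • (q - u) := by rw [← heq]; abel
      rw [this, smul_sub]; module
    obtain ⟨-, h⟩ := (mem_extremePoints.1 hr).2 _ hu _ (extremePoints_subset hq) this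
    exact hqr (h.symm ▸ rfl)
  · subst h1
    rw [one_smul] at heq
    exact hqr (by have := sub_left_injective.eq_iff.1 heq; rwa [eq_comm] at this)
  · have : q ∈ openSegment ℝ u r := by
      refine ⟨1 - 1/l, 1/l, by rw [sub_pos]; exact (div_lt_one (by linarith)).2 (by linarith),
        by positivity, by ring, ?_⟩
      have hq' : q = u + (1/l) • (r - u) := by
        rw [heq, smul_smul, one_div, inv_mul_cancel₀ (by linarith), one_smul]; abel
      rw [hq', smul_sub]; module
    obtain ⟨h, -⟩ := (mem_extremePoints.1 hq).2 _ hu _ (extremePoints_subset hr) this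
    exact hqu h.symm

lemma inner_isLinearMap (d : R2) : IsLinearMap ℝ (fun x : R2 => ⟪x, d⟫) :=
  ⟨fun x y => inner_add_left x y d, fun c x => real_inner_smul_left x d c⟩

lemma mem_hull_le {s : Set R2} {d : R2} {c : ℝ} (h : ∀ w ∈ s, ⟪w, d⟫ ≤ c) {x : R2}
    (hx : x ∈ convexHull ℝ s) : ⟪x, d⟫ ≤ c :=
  convexHull_min h (convex_halfSpace_le (inner_isLinearMap d) c) hx

lemma mem_hull_lt {s : Set R2} {d : R2} {c : ℝ} (h : ∀ w ∈ s, ⟪w, d⟫ < c) {x : R2}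
    (hx : x ∈ convexHull ℝ s) : ⟪x, d⟫ < c :=
  convexHull_min h (convex_halfSpace_lt (inner_isLinearMap d) c) hx

lemma isGreatest_hull (F : Finset R2) (hF : F.Nonempty) (d : R2) :
    ∃ q ∈ F, IsGreatest ((fun v => ⟪v, d⟫) '' (convexHull ℝ (F : Set R2))) ⟪q, d⟫ := by
  obtain ⟨q, hq, hmax⟩ := F.exists_max_image (fun v => ⟪v, d⟫) hF
  refine ⟨q, hq, ⟨q, subset_convexHull ℝ _ hq, rfl⟩, ?_⟩
  rintro r ⟨x, hx, rfl⟩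
  exact mem_hull_le (fun w hw => hmax w hw) hx

/-- basic facts about a polytope -/
lemma polytope_facts {X : Set R2} (hX : IsPolytope X) :
    (Set.extremePoints ℝ X).Finite ∧ (Set.extremePoints ℝ X).Nonempty ∧
      X = convexHull ℝ (Set.extremePoints ℝ X) ∧ Convex ℝ X ∧ IsClosed X := by
  obtain ⟨F, hFne, rfl⟩ := hX
  set X := convexHull ℝ (F : Set R2) with hXdef
  have hconv : Convex ℝ X := convex_convexHull ℝ _
  have hcomp : IsCompact X := F.finite_toSet.isCompact_convexHull ℝ
  have hfin : (Set.extremePoints ℝ X).Finite :=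
    F.finite_toSet.subset extremePoints_convexHull_subset
  have hKM := closure_convexHull_extremePoints hcomp hconv
  have hXV : X = convexHull ℝ (Set.extremePoints ℝ X) := by
    rw [IsClosed.closure_eq (hfin.isClosed_convexHull ℝ)] at hKM
    exact hKM.symm
  refine ⟨hfin, ?_, hXV, hconv, hcomp.isClosed⟩
  rcases Set.eq_empty_or_nonempty (Set.extremePoints ℝ X) with he | hne
  · exfalso
    have : X.Nonempty := ⟨hFne.choose, subset_convexHull ℝ _ hFne.choose_spec⟩
    rw [hXV, he, convexHull_empty] at this
    exact this.ne_empty rfl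
  · exact hne

lemma supp_eq {X : Set R2} {d : R2} {r : ℝ} (h : IsGreatest ((fun v => ⟪v, d⟫) '' X) r) :
    supp X d = r := h.csSup_eq

/-- the support function of a polytope is attained and is an upper bound -/
lemma poly_supp_spec {Y : Set R2} (hY : IsPolytope Y) (d : R2) :
    (∃ y ∈ Y, ⟪y, d⟫ = supp Y d) ∧ ∀ y ∈ Y, ⟪y, d⟫ ≤ supp Y d := by
  obtain ⟨F, hFne, rfl⟩ := hY
  obtain ⟨q, hq, hG⟩ := isGreatest_hull F hFne d
  rw [supp_eq hG]
  exact ⟨⟨q, subset_convexHull ℝ _ hq, rfl⟩, fun y hy => hG.2 ⟨y, hy, rfl⟩⟩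

/-- an exposing direction for an extreme point of a polytope -/
lemma exists_expose {X : Set R2} (hconv : Convex ℝ X)
    (hfin : (Set.extremePoints ℝ X).Finite) {q : R2} (hq : q ∈ Set.extremePoints ℝ X) :
    ∃ d : R2, ∀ w ∈ Set.extremePoints ℝ X, w ≠ q → ⟪w, d⟫ < ⟪q, d⟫ := by
  set V := Set.extremePoints ℝ X with hV
  by_cases hne : (V \ {q}).Nonempty
  · have hnotin : q ∉ convexHull ℝ (X \ {q}) :=
      ((hconv.mem_extremePoints_iff_mem_diff_convexHull_diff.1 hq).2)
    have hsub : convexHull ℝ (V \ {q}) ⊆ convexHull ℝ (X \ {q}) :=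
      convexHull_mono (Set.diff_subset_diff_left extremePoints_subset)
    have hnotin' : q ∉ convexHull ℝ (V \ {q}) := fun h => hnotin (hsub h)
    have hcl : IsClosed (convexHull ℝ (V \ {q})) :=
      Set.Finite.isClosed_convexHull ℝ (hfin.subset Set.diff_subset)
    obtain ⟨f, u, hfu, hfq⟩ := geometric_hahn_banach_closed_point
      (convex_convexHull ℝ _) hcl hnotin'
    refine ⟨(InnerProductSpace.toDual ℝ R2).symm f, fun w hw hwq => ?_⟩
    have h1 : ⟪w, (InnerProductSpace.toDual ℝ R2).symm f⟫ = f w := by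
      rw [real_inner_comm]; exact InnerProductSpace.toDual_symm_apply
    have h2 : ⟪q, (InnerProductSpace.toDual ℝ R2).symm f⟫ = f q := by
      rw [real_inner_comm]; exact InnerProductSpace.toDual_symm_apply
    rw [h1, h2]
    have : w ∈ convexHull ℝ (V \ {q}) := subset_convexHull ℝ _ ⟨hw, hwq⟩
    exact lt_trans (hfu w this) hfq
  · exact ⟨0, fun w hw hwq => absurd ⟨hw, hwq⟩ (fun h => hne ⟨w, h⟩)⟩

/-- strict separation of a point from a closed convex set -/
lemma exists_sep {X : Set R2} (hconv : Convex ℝ X) (hcl : IsClosed X) {z : R2} (hz : z ∉ X) :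
    ∃ e : R2, ∀ w ∈ X, ⟪w - z, e⟫ < 0 := by
  obtain ⟨f, u, hfz, hfX⟩ := geometric_hahn_banach_point_closed hconv hcl hz
  refine ⟨-((InnerProductSpace.toDual ℝ R2).symm f), fun w hw => ?_⟩
  rw [inner_neg_right, real_inner_comm]
  have : ⟪(InnerProductSpace.toDual ℝ R2).symm f, w - z⟫ = f (w - z) :=
    InnerProductSpace.toDual_symm_apply
  rw [this, map_sub]
  have := hfX w hw
  linarith

/-- a point of the hull attaining a strictly-exposed maximum is the exposed point -/
lemma max_unique {s : Set R2} {q d x : R2} (hq : q ∈ s)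
    (hstrict : ∀ w ∈ s, w ≠ q → ⟪w, d⟫ < ⟪q, d⟫)
    (hx : x ∈ convexHull ℝ s) (hxd : ⟪q, d⟫ ≤ ⟪x, d⟫) : x = q := by
  by_cases hne : (s \ {q}).Nonempty
  · have hins : insert q (s \ {q}) = s := by
      rw [Set.insert_diff_singleton, Set.insert_eq_self.2 hq]
    rw [← hins, convexHull_insert hne, mem_convexJoin] at hx
    obtain ⟨p, hp, z, hz, hseg⟩ := hx
    rw [Set.mem_singleton_iff] at hp
    rw [hp] at hseg
    obtain ⟨a, b, ha, hb, hab, hcomb⟩ := hseg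
    have hzd : ⟪z, d⟫ < ⟪q, d⟫ :=
      mem_hull_lt (fun w hw => hstrict w hw.1 hw.2) hz
    have hxval : ⟪x, d⟫ = a * ⟪q, d⟫ + b * ⟪z, d⟫ := by
      rw [← hcomb, inner_add_left, real_inner_smul_left, real_inner_smul_left]
    have hb0 : b = 0 := by
      by_contra h
      have hbpos : 0 < b := lt_of_le_of_ne hb (Ne.symm h)
      have h2 : a * ⟪q, d⟫ + b * ⟪q, d⟫ = ⟪q, d⟫ := by rw [← add_mul, hab, one_mul]
      have h3 := mul_lt_mul_of_pos_left hzd hbpos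
      linarith
    rw [hb0, zero_smul, add_zero] at hcomb
    have ha1 : a = 1 := by linarith
    rw [ha1, one_smul] at hcomb
    exact hcomb.symm
  · have hsq : s ⊆ {q} := by
      intro w hw
      by_contra hwq
      exact hne ⟨w, hw, hwq⟩
    have := convexHull_mono hsq hx
    rwa [convexHull_singleton] at this

end Stmt2Aux

open Stmt2Aux in
/-- a polytope `X ⊆ ℝ²` with exactly `n_v` vertices is determined by at
most `3 n_v` directions within the class of polytopes with exactly `n_v` vertices. -/
theorem stmt_2 (n_v : ℕ) (X : Set (EuclideanSpace ℝ (Fin 2))) (hX : IsPolytope X)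
    (hcard : (Set.extremePoints ℝ X).ncard = n_v) :
    ∃ D : Finset (EuclideanSpace ℝ (Fin 2)), D.card ≤ 3 * n_v ∧
      Determines {Y | IsPolytope Y ∧ (Set.extremePoints ℝ Y).ncard = n_v} D X := by
  classical
  obtain ⟨hVfin, hVne, hXV, hXconv, hXcl⟩ := polytope_facts hX
  set V := Set.extremePoints ℝ X with hVdef
  rcases Nat.eq_zero_or_pos n_v with rfl | hpos
  · -- impossible: a polytope has an extreme point
    exact absurd ((Set.ncard_eq_zero hVfin).1 hcard) hVne.ne_empty
  rcases eq_or_lt_of_le (Nat.succ_le_of_lt hpos) with h1 | hk2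
  · -- n_v = 1 : X is a single point
    obtain ⟨v, hVv⟩ := Set.ncard_eq_one.1 (hcard.trans h1.symm)
    have hXv : X = {v} := by rw [hXV, hVv, convexHull_singleton]
    set e0 : R2 := (WithLp.equiv 2 _).symm ![(1:ℝ), 0] with he0
    set e1 : R2 := (WithLp.equiv 2 _).symm ![(0:ℝ), 1] with he1
    refine ⟨{e0, e1}, ?_, ?_⟩
    · calc ({e0, e1} : Finset R2).card ≤ 2 := Finset.card_insert_le _ _ |>.trans (by simp)
        _ ≤ 3 * n_v := by omega
    · intro Y hY hagree
      obtain ⟨hYfin, hYne, hYV, hYconv, hYcl⟩ := polytope_facts hY.1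
      obtain ⟨w, hWw⟩ := Set.ncard_eq_one.1 (hY.2.trans h1.symm)
      have hYw : Y = {w} := by rw [hYV, hWw, convexHull_singleton]
      have hsupp : ∀ d : R2, supp Y d = ⟪w, d⟫ := by
        intro d
        rw [hYw]
        show sSup ((fun v => ⟪v, d⟫) '' {w}) = _
        rw [Set.image_singleton, csSup_singleton]
      have hsupp' : ∀ d : R2, supp X d = ⟪v, d⟫ := by
        intro d
        rw [hXv]
        show sSup ((fun v' => ⟪v', d⟫) '' {v}) = _
        rw [Set.image_singleton, csSup_singleton]
      have hw0 : w 0 = v 0 := by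
        have := hagree e0 (by simp)
        rw [hsupp, hsupp', inner_two, inner_two] at this
        have he00 : e0 0 = 1 := rfl
        have he01 : e0 1 = 0 := rfl
        rw [he00, he01] at this
        linarith
      have hw1 : w 1 = v 1 := by
        have := hagree e1 (by simp)
        rw [hsupp, hsupp', inner_two, inner_two] at this
        have he10 : e1 0 = 0 := rfl
        have he11 : e1 1 = 1 := rfl
        rw [he10, he11] at this
        linarith
      rw [hYw, hXv, ext_two hw0 hw1]
  -- main case : 2 ≤ n_v
  set V' : Finset R2 := hVfin.toFinset with hV'def
  have hmemV : ∀ {w : R2}, w ∈ V' → w ∈ V := fun h => hVfin.mem_toFinset.1 h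
  have hmemV' : ∀ {w : R2}, w ∈ V → w ∈ V' := fun h => hVfin.mem_toFinset.2 h
  have hV'card : V'.card = n_v := by
    rw [← hcard, Set.ncard_eq_toFinset_card _ hVfin]
  have hVX : V ⊆ X := extremePoints_subset
  -- exposing directions
  have hexp : ∀ q : R2, ∃ d : R2, q ∈ V → ∀ w ∈ V, w ≠ q → ⟪w, d⟫ < ⟪q, d⟫ := by
    intro q
    by_cases hq : q ∈ V
    · obtain ⟨d, hd⟩ := exists_expose hXconv hVfin hq
      exact ⟨d, fun _ => hd⟩
    · exact ⟨0, fun h => absurd h hq⟩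
  choose dir hdir using hexp
  -- supporting pairs
  set E' : Finset (R2 × R2) := (V' ×ˢ V').filter
      (fun p => p.1 ≠ p.2 ∧ ∀ w ∈ V', 0 ≤ cross (p.2 - p.1) (w - p.1)) with hE'def
  have hE'mem : ∀ {p : R2 × R2}, p ∈ E' →
      p.1 ∈ V' ∧ p.2 ∈ V' ∧ p.1 ≠ p.2 ∧ ∀ w ∈ V', 0 ≤ cross (p.2 - p.1) (w - p.1) := by
    intro p hp
    rw [hE'def, Finset.mem_filter, Finset.mem_product] at hp
    exact ⟨hp.1.1, hp.1.2, hp.2.1, hp.2.2⟩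
  -- at most two supporting pairs per first vertex
  have hfiber : ∀ u ∈ V', (E'.filter (fun p => p.1 = u)).card ≤ 2 := by
    intro u hu
    by_contra hgt
    push_neg at hgt
    obtain ⟨pa, pb, pc, hpa, hpb, hpc, hab, hac, hbc⟩ :=
      Finset.two_lt_card_iff.1 hgt
    obtain ⟨hpaE, hpa1⟩ := Finset.mem_filter.1 hpa
    obtain ⟨hpbE, hpb1⟩ := Finset.mem_filter.1 hpb
    obtain ⟨hpcE, hpc1⟩ := Finset.mem_filter.1 hpc
    set a := pa.2; set b := pb.2; set c := pc.2
    obtain ⟨-, haV, hau, hacond⟩ := hE'mem hpaE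
    obtain ⟨-, hbV, hbu, hbcond⟩ := hE'mem hpbE
    obtain ⟨-, hcV, hcu, hccond⟩ := hE'mem hpcE
    rw [hpa1] at hau hacond
    rw [hpb1] at hbu hbcond
    rw [hpc1] at hcu hccond
    have hne_ab : a ≠ b := fun h => hab (Prod.ext (hpa1.trans hpb1.symm) h)
    have hne_ac : a ≠ c := fun h => hac (Prod.ext (hpa1.trans hpc1.symm) h)
    have hne_bc : b ≠ c := fun h => hbc (Prod.ext (hpb1.trans hpc1.symm) h)
    have huX : u ∈ X := hVX (hmemV hu)
    -- the ratio of b - u to a - u is negative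
    have ratio_neg : ∀ x y : R2, x ∈ V' → y ∈ V' → u ≠ x → u ≠ y → x ≠ y →
        (∀ w ∈ V', 0 ≤ cross (x - u) (w - u)) → (∀ w ∈ V', 0 ≤ cross (y - u) (w - u)) →
        ∃ l : ℝ, l < 0 ∧ y - u = l • (x - u) := by
      intro x y hxV hyV hux huy hxy hxcond hycond
      have h1 := hxcond y hyV
      have h2 := hycond x hxV
      rw [cross_anti] at h2
      have hcr : cross (x - u) (y - u) = 0 := le_antisymm (by linarith) h1
      have hxne : x - u ≠ 0 := sub_ne_zero.2 (Ne.symm hux)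
      obtain ⟨l, hl⟩ := collinear_of_cross_eq_zero hcr hxne
      have hlne : l ≠ 0 := by
        rintro rfl
        rw [zero_smul, sub_eq_zero] at hl
        exact huy hl.symm
      rcases lt_or_gt_of_ne hlne with hlneg | hlpos
      · exact ⟨l, hlneg, hl⟩
      · exact absurd (no_three huX (hmemV hxV) (hmemV hyV) (Ne.symm hux) hxy hlpos hl) id
    obtain ⟨lb, hlb_neg, hlb⟩ := ratio_neg a b haV hbV hau hbu hne_ab
      hacond hbcond
    obtain ⟨lc, hlc_neg, hlc⟩ := ratio_neg a c haV hcV hau hcu hne_ac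
      hacond hccond
    -- c - u = (lc / lb) • (b - u) with positive ratio : contradiction
    have hratio : c - u = (lc / lb) • (b - u) := by
      rw [hlb, smul_smul, div_mul_cancel₀ _ (ne_of_lt hlb_neg)]
      exact hlc
    exact no_three huX (hmemV hbV) (hmemV hcV) (Ne.symm hbu) hne_bc
      (div_pos_of_neg_of_neg hlc_neg hlb_neg) hratio
  have hE'card : E'.card ≤ 2 * n_v := by
    have h1 : E'.card = ∑ u ∈ V', (E'.filter (fun p => p.1 = u)).card :=
      Finset.card_eq_sum_card_fiberwise (fun p hp => (hE'mem hp).1)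
    calc E'.card = ∑ u ∈ V', (E'.filter (fun p => p.1 = u)).card := h1
      _ ≤ ∑ _u ∈ V', 2 := Finset.sum_le_sum hfiber
      _ = 2 * n_v := by rw [Finset.sum_const, smul_eq_mul, hV'card, mul_comm]
  -- the direction set
  set nrm : R2 × R2 → R2 := fun p => -(rot (p.2 - p.1)) with hnrm
  set D : Finset R2 := E'.image nrm ∪ V'.image dir with hDdef
  have hinner_nrm : ∀ (p : R2 × R2) (x : R2), ⟪x, nrm p⟫ = - cross (p.2 - p.1) x := by
    intro p x
    rw [hnrm]
    show ⟪x, -(rot (p.2 - p.1))⟫ = _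
    rw [inner_neg_right, inner_rot']
  refine ⟨D, ?_, ?_⟩
  · calc D.card ≤ (E'.image nrm).card + (V'.image dir).card := Finset.card_union_le _ _
      _ ≤ E'.card + V'.card := add_le_add (Finset.card_image_le) (Finset.card_image_le)
      _ ≤ 2 * n_v + n_v := by rw [hV'card]; exact Nat.add_le_add_right hE'card _
      _ = 3 * n_v := by ring
  -- supp X in the chosen directions
  have hsX_nrm : ∀ p ∈ E', supp X (nrm p) = ⟪p.1, nrm p⟫ := by
    intro p hp
    obtain ⟨hp1, -, -, hpcond⟩ := hE'mem hp
    apply supp_eq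
    constructor
    · exact ⟨p.1, hVX (hmemV hp1), rfl⟩
    · rintro r ⟨x, hx, rfl⟩
      rw [hXV] at hx
      refine mem_hull_le (fun w hw => ?_) hx
      have h0 := hpcond w (hmemV' hw)
      have h2 : ⟪w - p.1, nrm p⟫ ≤ 0 := by
        rw [hinner_nrm]; linarith
      rw [inner_sub_left] at h2
      linarith
  have hsX_dir : ∀ q ∈ V', supp X (dir q) = ⟪q, dir q⟫ := by
    intro q hq
    apply supp_eq
    constructor
    · exact ⟨q, hVX (hmemV hq), rfl⟩
    · rintro r ⟨x, hx, rfl⟩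
      rw [hXV] at hx
      refine mem_hull_le (fun w hw => ?_) hx
      by_cases hwq : w = q
      · rw [hwq]
      · exact (hdir q (hmemV hq) w hw hwq).le
  -- the key geometric fact : the chosen inequalities cut out exactly X
  have hsub : ∀ z : R2, (∀ p ∈ E', ⟪z, nrm p⟫ ≤ ⟪p.1, nrm p⟫) →
      (∀ q ∈ V', ⟪z, dir q⟫ ≤ ⟪q, dir q⟫) → z ∈ X := by
    intro z h1 h2
    by_contra hzX
    obtain ⟨e, he⟩ := exists_sep hXconv hXcl hzX
    have heV : ∀ w ∈ V', ⟪w - z, e⟫ < 0 := fun w hw => he w (hVX (hmemV hw))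
    have hV'ne : V'.Nonempty := ⟨hVne.choose, hmemV' hVne.choose_spec⟩
    obtain ⟨m, hm, hmax⟩ := exists_max e (fun w => w - z) V' hV'ne heV
    set T := V'.filter (fun w => cross (m - z) (w - z) = 0) with hTdef
    have hmT : m ∈ T := Finset.mem_filter.2 ⟨hm, cross_self2 _⟩
    obtain ⟨ws, hwsT, hwsmax⟩ := T.exists_max_image (fun w => ⟪w - z, m - z⟫) ⟨m, hmT⟩
    have hwsV : ws ∈ V' := (Finset.mem_filter.1 hwsT).1
    have hcol : cross (m - z) (ws - z) = 0 := (Finset.mem_filter.1 hwsT).2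
    obtain ⟨ls, hls_pos, hls⟩ := collinear_pos hcol (heV m hm) (heV ws hwsV)
    have F1 : ∀ w ∈ V', cross (ws - z) (w - z) ≤ 0 := by
      intro w hw
      rw [hls, cross_smul_left]
      exact mul_nonpos_of_nonneg_of_nonpos hls_pos.le (hmax w hw)
    have Fsub : ∀ w : R2, w - ws = (w - z) - (ws - z) := by
      intro w; abel
    have F2 : ∀ w ∈ V', cross (ws - z) (w - ws) ≤ 0 := by
      intro w hw
      rw [Fsub, cross_sub_right, cross_self2, sub_zero]
      exact F1 w hw
    by_cases h0 : ∃ w0 ∈ V', w0 ≠ ws ∧ cross (ws - z) (w0 - ws) = 0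
    · -- degenerate case : another vertex collinear with z and ws
      obtain ⟨w0, hw0V, hw0ne, hw0c⟩ := h0
      have hcz : cross (ws - z) (w0 - z) = 0 := by
        rw [Fsub, cross_sub_right, cross_self2, sub_zero] at hw0c
        exact hw0c
      have hmz0 : cross (m - z) (w0 - z) = 0 := by
        rw [hls, cross_smul_left] at hcz
        exact (mul_eq_zero.1 hcz).resolve_left (ne_of_gt hls_pos)
      have hw0T : w0 ∈ T := Finset.mem_filter.2 ⟨hw0V, hmz0⟩
      obtain ⟨l0, hl0_pos, hl0⟩ := collinear_pos hmz0 (heV m hm) (heV w0 hw0V)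
      have hmzne : m - z ≠ 0 := fun h => by
        have := heV m hm; rw [h, inner_zero_left] at this; exact lt_irrefl _ this
      have hip_pos : (0:ℝ) < ⟪m - z, m - z⟫ := inner_self_pos2 hmzne
      have hle : l0 ≤ ls := by
        have := hwsmax w0 hw0T
        rw [hl0, hls, real_inner_smul_left, real_inner_smul_left] at this
        exact le_of_mul_le_mul_right this hip_pos
      have hlt : l0 < ls := by
        rcases lt_or_eq_of_le hle with h | h
        · exact h
        · exfalso
          apply hw0ne
          rw [h] at hl0
          have : w0 - z = ws - z := hl0.trans hls.symm
          have := sub_left_injective.eq_iff.1 this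
          exact this
      -- contradiction with the exposing direction at w0
      set d := dir w0 with hd0
      have hzd := h2 w0 hw0V
      have hwsw0 : ws ≠ w0 := fun h => hw0ne h.symm
      have hstr : ⟪ws, d⟫ < ⟪w0, d⟫ := hdir w0 (hmemV hw0V) ws (hmemV hwsV) hwsw0
      have hsub0 : w0 - ws = (l0 - ls) • (m - z) := by
        rw [sub_smul, ← hl0, ← hls]; abel
      have hA : ⟪w0, d⟫ - ⟪z, d⟫ = l0 * ⟪m - z, d⟫ := by
        rw [← inner_sub_left, hl0, real_inner_smul_left]
      have hB : ⟪w0, d⟫ - ⟪ws, d⟫ = (l0 - ls) * ⟪m - z, d⟫ := by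
        rw [← inner_sub_left, hsub0, real_inner_smul_left]
      have hmd_neg : ⟪m - z, d⟫ < 0 := by
        rcases lt_trichotomy (⟪m - z, d⟫ : ℝ) 0 with h | h | h
        · exact h
        · exfalso; rw [h, mul_zero] at hB; linarith
        · exfalso; nlinarith
      nlinarith [mul_pos hl0_pos (neg_pos.2 hmd_neg)]
    · -- generic case : a genuine supporting pair violated by z
      push_neg at h0
      have hS : ∀ w ∈ V'.erase ws, ⟪w - ws, rot (ws - z)⟫ < 0 := by
        intro w hw
        have hwV := Finset.mem_of_mem_erase hw
        have hwne := Finset.ne_of_mem_erase hw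
        rw [real_inner_comm, inner_rot]
        exact lt_of_le_of_ne (F2 w hwV) (h0 w hwV hwne)
      have hSne : (V'.erase ws).Nonempty := by
        obtain ⟨b, hb, hbne⟩ := (Finset.one_lt_card_iff_nontrivial.1 (by omega : 1 < V'.card)).exists_ne ws
        exact ⟨b, Finset.mem_erase.2 ⟨hbne, hb⟩⟩
      obtain ⟨w1, hw1S, hw1min⟩ := exists_min (rot (ws - z)) (fun w => w - ws) (V'.erase ws) hSne hS
      have hw1V : w1 ∈ V' := Finset.mem_of_mem_erase hw1S
      have hw1ne : w1 ≠ ws := Finset.ne_of_mem_erase hw1S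
      have hpairE : (ws, w1) ∈ E' := by
        rw [hE'def, Finset.mem_filter, Finset.mem_product]
        refine ⟨⟨hwsV, hw1V⟩, fun h => hw1ne h.symm, ?_⟩
        intro w hw
        by_cases hwws : w = ws
        · rw [hwws, sub_self, cross_zero_right]
        · exact hw1min w (Finset.mem_erase.2 ⟨hwws, hw⟩)
      have hineq := h1 (ws, w1) hpairE
      have h3 : ⟪z - ws, nrm (ws, w1)⟫ ≤ 0 := by
        rw [inner_sub_left]; linarith
      rw [hinner_nrm] at h3
      -- so cross (w1 - ws) (z - ws) ≥ 0 ; but z - ws = -c and cross c (w1 - ws) < 0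
      have h4 : 0 ≤ cross (w1 - ws) (z - ws) := by
        show (0:ℝ) ≤ cross ((ws, w1).2 - (ws, w1).1) (z - ws)
        linarith
      have h5 : z - ws = -(ws - z) := by abel
      rw [h5, cross_neg_right] at h4
      have h6 : cross (ws - z) (w1 - ws) < 0 :=
        lt_of_le_of_ne (F2 w1 hw1V) (h0 w1 hw1V hw1ne)
      rw [cross_anti] at h6
      linarith
  -- now prove Determines
  intro Y hY hagree
  obtain ⟨hYfin, hYne, hYV, hYconv, hYcl⟩ := polytope_facts hY.1
  have hnrmD : ∀ p ∈ E', nrm p ∈ D := by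
    intro p hp
    exact Finset.mem_union_left _ (Finset.mem_image_of_mem nrm hp)
  have hdirD : ∀ q ∈ V', dir q ∈ D := by
    intro q hq
    exact Finset.mem_union_right _ (Finset.mem_image_of_mem dir hq)
  have hYsubX : Y ⊆ X := by
    intro y hy
    apply hsub y
    · intro p hp
      have hub := (poly_supp_spec hY.1 (nrm p)).2 y hy
      rw [hagree (nrm p) (hnrmD p hp), hsX_nrm p hp] at hub
      exact hub
    · intro q hq
      have hub := (poly_supp_spec hY.1 (dir q)).2 y hy
      rw [hagree (dir q) (hdirD q hq), hsX_dir q hq] at hub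
      exact hub
  have hVY : ∀ q ∈ V', q ∈ Y := by
    intro q hq
    obtain ⟨⟨y0, hy0Y, hy0⟩, -⟩ := poly_supp_spec hY.1 (dir q)
    rw [hagree (dir q) (hdirD q hq), hsX_dir q hq] at hy0
    have hy0X : y0 ∈ X := hYsubX hy0Y
    rw [hXV] at hy0X
    have : y0 = q := max_unique (hmemV hq) (hdir q (hmemV hq)) hy0X hy0.ge
    rwa [← this]
  have hXsubY : X ⊆ Y := by
    rw [hXV]
    refine convexHull_min (fun w hw => hVY w (hmemV' hw)) hYconv
  exact Set.Subset.antisymm hYsubX hXsubY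
end

section
/- Let X ⊆ ℝ² be a polytope with exactly n_v vertices (extreme points). Then there exists a finite set D ⊆ ℝ² of directions with |D| ≤ 3·n_v + 1 such that D determines X within the class of all polytopes in ℝ². (This is the determination content of the convergence of Algorithm 1 in the case where the known upper bound on the number of vertices strictly exceeds n_v, including the case of no known bound: the algorithm terminates after at most 3n_v + 1 oracle calls with S_v = X_v.) -/
open RealInnerProductSpace

local notation "E2" => EuclideanSpace ℝ (Fin 2)


lemma inner2 (x y : E2) : ⟪x, y⟫ = x 0 * y 0 + x 1 * y 1 := by
  simp [PiLp.inner_apply, Fin.sum_univ_two, RCLike.inner_apply, conj_trivial]; ring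

noncomputable def rot (x : E2) : E2 := WithLp.toLp 2 ![-(x 1), x 0]

def cross (x y : E2) : ℝ := x 0 * y 1 - x 1 * y 0

lemma inner_rot (x y : E2) : ⟪rot x, y⟫ = cross x y := by
  rw [inner2]; show -(x 1) * y 0 + x 0 * y 1 = _; unfold cross; ring

lemma inner_rot' (x y : E2) : ⟪y, rot x⟫ = cross x y := by
  rw [real_inner_comm]; exact inner_rot x y

lemma cross_antisymm (x y : E2) : cross x y = - cross y x := by unfold cross; ring

lemma zero_apply' (i : Fin 2) : (0 : E2) i = 0 := rfl

lemma cross_zero_right (x : E2) : cross x 0 = 0 := by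
  unfold cross; rw [zero_apply', zero_apply']; ring

lemma inner_self_pos' {z : E2} (hz : z ≠ 0) : 0 < ⟪z, z⟫ := by
  rcases lt_or_eq_of_le (real_inner_self_nonneg (x := z)) with h | h
  · exact h
  · exact absurd (inner_self_eq_zero.mp h.symm) hz

lemma sub_apply' (x y : E2) (i : Fin 2) : (x - y) i = x i - y i := rfl
lemma smul_apply' (c : ℝ) (x : E2) (i : Fin 2) : (c • x) i = c * x i := rfl
lemma add_apply' (x y : E2) (i : Fin 2) : (x + y) i = x i + y i := rfl

lemma crossid (e x y : E2) :
    ⟪e, e⟫ * cross x y = ⟪y, e⟫ * cross x e - ⟪x, e⟫ * cross y e := by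
  rw [inner2, inner2, inner2]; unfold cross; ring

lemma parallel {z x : E2} (hz : z ≠ 0) (h : cross z x = 0) :
    x = (⟪x, z⟫ / ⟪z, z⟫) • z := by
  have hzz : (0:ℝ) < ⟪z, z⟫ := inner_self_pos' hz
  have hne : ⟪z, z⟫ ≠ 0 := ne_of_gt hzz
  unfold cross at h
  ext i
  rw [smul_apply']
  fin_cases i
  · show x 0 = ⟪x, z⟫ / ⟪z, z⟫ * z 0
    rw [inner2, inner2] at *
    rw [div_mul_eq_mul_div, eq_div_iff hne]
    linear_combination (-(z 1)) * h
  · show x 1 = ⟪x, z⟫ / ⟪z, z⟫ * z 1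
    rw [inner2, inner2] at *
    rw [div_mul_eq_mul_div, eq_div_iff hne]
    linear_combination (z 0) * h

lemma decomp (wa wb z : E2) (h : cross wa wb ≠ 0) :
    z = (cross z wb / cross wa wb) • wa + (cross wa z / cross wa wb) • wb := by
  ext i
  rw [add_apply', smul_apply', smul_apply']
  fin_cases i <;> (simp only [Fin.zero_eta, Fin.mk_one, Fin.isValue]; unfold cross at *; rw [div_mul_eq_mul_div, div_mul_eq_mul_div, ← add_div, eq_div_iff h]; ring)


lemma hull_inner_le {V : Finset E2} (hV : V.Nonempty) (d : E2) {x : E2}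
    (hx : x ∈ convexHull ℝ (V : Set E2)) : ⟪x, d⟫ ≤ V.sup' hV (fun v => ⟪v, d⟫) := by
  have hconv : Convex ℝ {y : E2 | ⟪y, d⟫ ≤ V.sup' hV (fun v => ⟪v, d⟫)} := by
    intro a ha b hb s t hs ht hst
    simp only [Set.mem_setOf_eq] at *
    rw [inner_add_left, real_inner_smul_left, real_inner_smul_left]
    calc s * ⟪a,d⟫ + t * ⟪b,d⟫ ≤ s * (V.sup' hV fun v => ⟪v, d⟫) + t * (V.sup' hV fun v => ⟪v, d⟫) := by
          gcongr
      _ = _ := by rw [← add_mul, hst, one_mul]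
  have hsub : (V : Set E2) ⊆ {y : E2 | ⟪y, d⟫ ≤ V.sup' hV (fun v => ⟪v, d⟫)} := by
    intro v hv
    exact Finset.le_sup' (fun v => ⟪v, d⟫) hv
  exact convexHull_min hsub hconv hx

lemma supp_hull {V : Finset E2} (hV : V.Nonempty) (d : E2) :
    supp (convexHull ℝ (V : Set E2)) d = V.sup' hV (fun v => ⟪v, d⟫) := by
  apply le_antisymm
  · apply csSup_le
    · exact ((hV.to_set.mono (subset_convexHull ℝ _)).image _)
    · rintro r ⟨x, hx, rfl⟩; exact hull_inner_le hV d hx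
  · obtain ⟨v, hv, hveq⟩ := V.exists_mem_eq_sup' hV (fun v => ⟪v, d⟫)
    rw [hveq]
    apply le_csSup
    · refine ⟨V.sup' hV (fun v => ⟪v, d⟫), ?_⟩
      rintro r ⟨x, hx, rfl⟩
      exact hull_inner_le hV d hx
    · exact ⟨v, subset_convexHull ℝ _ hv, rfl⟩

lemma supp_attained {V : Finset E2} (hV : V.Nonempty) (d : E2) :
    ∃ v ∈ V, ⟪v, d⟫ = supp (convexHull ℝ (V : Set E2)) d := by
  obtain ⟨v, hv, hveq⟩ := V.exists_mem_eq_sup' hV (fun v => ⟪v, d⟫)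
  exact ⟨v, hv, by rw [supp_hull hV d, ← hveq]⟩

lemma mem_face {V : Finset E2} {d x : E2} {m : ℝ}
    (hx : x ∈ convexHull ℝ (V : Set E2)) (hub : ∀ w ∈ V, ⟪w, d⟫ ≤ m)
    (hxm : ⟪x, d⟫ = m) :
    x ∈ convexHull ℝ ((V.filter (fun w => ⟪w, d⟫ = m)) : Set E2) := by
  rw [Finset.mem_convexHull] at hx
  obtain ⟨w, hw0, hw1, hwx⟩ := hx
  -- inner of centerMass
  have hinner : ∑ y ∈ V, w y * ⟪y, d⟫ = m := by
    have : ⟪x, d⟫ = ∑ y ∈ V, w y * ⟪y, d⟫ := by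
      rw [← hwx, Finset.centerMass, hw1, inv_one, one_smul, sum_inner]
      exact Finset.sum_congr rfl fun y _ => by rw [real_inner_smul_left]; rfl
    rw [← this, hxm]
  -- each weight positive implies maximizer
  have key : ∀ y ∈ V, w y ≠ 0 → ⟪y, d⟫ = m := by
    by_contra hcon
    push_neg at hcon
    obtain ⟨y0, hy0V, hy0ne, hy0lt⟩ := hcon
    have hstrict : w y0 * ⟪y0, d⟫ < w y0 * m :=
      mul_lt_mul_of_pos_left (lt_of_le_of_ne (hub _ hy0V) hy0lt)
        (lt_of_le_of_ne (hw0 _ hy0V) (Ne.symm hy0ne))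
    have hsum : ∑ y ∈ V, w y * ⟪y, d⟫ < ∑ y ∈ V, w y * m := by
      apply Finset.sum_lt_sum (fun i hi => mul_le_mul_of_nonneg_left (hub _ hi) (hw0 _ hi))
        ⟨y0, hy0V, hstrict⟩
    rw [← Finset.sum_mul, hw1, one_mul] at hsum
    exact absurd hinner (ne_of_lt hsum)
  -- restrict to the filter
  have hsub : V.filter (fun i => w i ≠ 0) ⊆ V.filter (fun w => ⟪w, d⟫ = m) := by
    intro y hy
    rw [Finset.mem_filter] at *
    exact ⟨hy.1, key y hy.1 hy.2⟩
  have hxcm : (V.filter (fun i => w i ≠ 0)).centerMass w id = x := by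
    rw [Finset.centerMass_filter_ne_zero, hwx]
  rw [← hxcm]
  apply Finset.centerMass_mem_convexHull _ (fun i hi => hw0 i (Finset.mem_filter.mp hi).1)
  · rw [Finset.sum_filter_ne_zero, hw1]; exact one_pos
  · intro i hi
    exact Finset.mem_coe.mpr (hsub hi)


lemma polytope_eq_hull_extreme {X : Set E2} (hX : IsPolytope X) :
    ∃ V : Finset E2, V.Nonempty ∧ (V : Set E2) = Set.extremePoints ℝ X ∧
      X = convexHull ℝ (V : Set E2) := by
  obtain ⟨F, hFne, hFX⟩ := hX
  have hsub : Set.extremePoints ℝ X ⊆ (F : Set E2) := by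
    rw [hFX]; exact extremePoints_convexHull_subset
  have hfin : (Set.extremePoints ℝ X).Finite := (F.finite_toSet).subset hsub
  refine ⟨hfin.toFinset, ?_, by simp, ?_⟩
  · -- nonempty
    rw [Set.Finite.toFinset_nonempty]
    by_contra hempty
    rw [Set.not_nonempty_iff_eq_empty] at hempty
    have hXcomp : IsCompact X := hFX ▸ F.finite_toSet.isCompact_convexHull ℝ
    have hXconv : Convex ℝ X := hFX ▸ convex_convexHull ℝ _
    have h1 : closure (convexHull ℝ (Set.extremePoints ℝ X)) = X :=
      closure_convexHull_extremePoints hXcomp hXconv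
    rw [hempty] at h1
    simp only [convexHull_empty, closure_empty] at h1
    have : (F : Set E2) ⊆ X := hFX ▸ subset_convexHull ℝ _
    obtain ⟨f, hf⟩ := hFne
    have := this hf
    rw [← h1] at this
    simpa using this
  · have hXcomp : IsCompact X := hFX ▸ F.finite_toSet.isCompact_convexHull ℝ
    have hXconv : Convex ℝ X := hFX ▸ convex_convexHull ℝ _
    have h1 : closure (convexHull ℝ (Set.extremePoints ℝ X)) = X :=
      closure_convexHull_extremePoints hXcomp hXconv
    have h2 : IsClosed (convexHull ℝ (Set.extremePoints ℝ X)) :=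
      hfin.isClosed_convexHull (𝕜 := ℝ)
    rw [h2.closure_eq] at h1
    have h3 : (hfin.toFinset : Set E2) = Set.extremePoints ℝ X := by simp
    rw [h3, h1]

lemma collinear_eq {X : Set E2} {V : Finset E2} (hVX : (V : Set E2) ⊆ Set.extremePoints ℝ X)
    (hVXsub : (V : Set E2) ⊆ X) {u v j : E2} (hu : u ∈ V) (hv : v ∈ V) (hj : j ∈ V)
    (hju : j ≠ u) {s : ℝ} (hs : 0 < s) (heq : j - u = s • (v - u)) : j = v := by
  rcases lt_trichotomy s 1 with h1 | h1 | h1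
  · -- j ∈ openSegment u v
    have hjseg : j ∈ openSegment ℝ u v := by
      refine ⟨1 - s, s, by linarith, hs, by ring, ?_⟩
      have hj' : j = u + s • (v - u) := by rw [← heq]; abel
      rw [hj', smul_sub, sub_smul, one_smul]; abel
    exact ((hVX hj).2 (hVXsub hv) (hVXsub hu) (by rwa [openSegment_symm])).symm
  · subst h1
    rw [one_smul] at heq
    exact sub_left_injective heq
  · -- v ∈ openSegment u j
    have hvseg : v ∈ openSegment ℝ u j := by
      refine ⟨1 - 1/s, 1/s, by rw [sub_pos, div_lt_one] <;> linarith,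
        by positivity, by ring, ?_⟩
      have hv' : v - u = (1/s) • (j - u) := by
        rw [heq, smul_smul, one_div, inv_mul_cancel₀ (ne_of_gt hs), one_smul]
      have hv'' : v = u + (1/s) • (j - u) := by rw [← hv']; abel
      rw [hv'', smul_sub, sub_smul, one_smul]; abel
    exact (hVX hv).2 (hVXsub hj) (hVXsub hu) (by rwa [openSegment_symm])

lemma exposing {X : Set E2} {V : Finset E2} (hVX : (V : Set E2) = Set.extremePoints ℝ X)
    (hXV : X = convexHull ℝ (V : Set E2)) {v : E2} (hv : v ∈ V) :
    ∃ e : E2, ∀ w ∈ V, w ≠ v → ⟪w, e⟫ < ⟪v, e⟫ := by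
  classical
  set K := convexHull ℝ ((V.erase v : Finset E2) : Set E2) with hK
  have hvK : v ∉ K := by
    intro hvmem
    have hXconv : Convex ℝ X := hXV ▸ convex_convexHull ℝ _
    have hvext : v ∈ Set.extremePoints ℝ X := hVX ▸ hv
    rw [hXconv.mem_extremePoints_iff_convex_diff] at hvext
    have hKsub : K ⊆ X \ {v} := by
      apply convexHull_min ?_ hvext.2
      intro w hw
      rw [Finset.coe_erase] at hw
      exact ⟨(hXV ▸ subset_convexHull ℝ (V : Set E2)) hw.1, hw.2⟩
    exact (hKsub hvmem).2 rfl
  obtain ⟨f, c, hfK, hfv⟩ := geometric_hahn_banach_closed_point (convex_convexHull ℝ _)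
    ((V.erase v).finite_toSet.isClosed_convexHull (𝕜 := ℝ)) hvK
  set e := (InnerProductSpace.toDual ℝ (EuclideanSpace ℝ (Fin 2))).symm f with he
  have hfe : ∀ x : E2, ⟪x, e⟫ = f x := by
    intro x
    rw [real_inner_comm]
    exact InnerProductSpace.toDual_symm_apply
  refine ⟨e, fun w hw hwv => ?_⟩
  rw [hfe, hfe]
  have hwK : w ∈ K := subset_convexHull ℝ _
    (by rw [Finset.mem_coe, Finset.mem_erase]; exact ⟨hwv, hw⟩)
  exact lt_trans (hfK w hwK) hfv
lemma vertex_data {X : Set E2} {V : Finset E2}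
    (hVX : (V : Set E2) = Set.extremePoints ℝ X)
    (hXV : X = convexHull ℝ (V : Set E2))
    (hcard : 3 ≤ V.card) {u : E2} (hu : u ∈ V) :
    ∃ e n1 n2 : E2,
      (∀ w ∈ V, w ≠ u → ⟪w, e⟫ < ⟪u, e⟫) ∧
      (∀ w ∈ V, ⟪w, n1⟫ ≤ ⟪u, n1⟫) ∧
      (∀ w ∈ V, ⟪w, n2⟫ ≤ ⟪u, n2⟫) ∧
      (∀ z : E2, z ≠ 0 → (∀ w ∈ V, ⟪w - u, z⟫ ≤ 0) → 0 < ⟪z, n1⟫ ∨ 0 < ⟪z, n2⟫) ∧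
      (∀ v ∈ V, v ≠ u → (∀ w ∈ V, ⟪w - u, rot (v - u)⟫ ≤ 0) → rot (v - u) = n2) := by
  classical
  obtain ⟨e, he⟩ := exposing hVX hXV hu
  have hVsubX : (V : Set E2) ⊆ X := hXV ▸ subset_convexHull ℝ _
  have hVext : (V : Set E2) ⊆ Set.extremePoints ℝ X := le_of_eq hVX
  set W := V.erase u with hW
  have hWcard : 2 ≤ W.card := by
    rw [hW, Finset.card_erase_of_mem hu]; omega
  have hWne : W.Nonempty := Finset.card_pos.mp (by omega)
  have hWV : ∀ v ∈ W, v ∈ V ∧ v ≠ u := fun v hv =>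
    ⟨Finset.mem_of_mem_erase hv, Finset.ne_of_mem_erase hv⟩
  have hneg : ∀ v ∈ W, ⟪v - u, e⟫ < 0 := by
    intro v hv
    rw [inner_sub_left]
    have := he v (hWV v hv).1 (hWV v hv).2
    linarith
  have hee : (0:ℝ) < ⟪e, e⟫ := by
    obtain ⟨w0, hw0⟩ := hWne
    apply inner_self_pos'
    intro h0
    have h1 := hneg w0 hw0
    rw [h0, inner_zero_right] at h1
    exact lt_irrefl 0 h1
  set t : E2 → ℝ := fun v => cross (v - u) e / (-⟪v - u, e⟫) with ht
  have key : ∀ v ∈ W, ∀ v' ∈ W, t v ≤ t v' → cross (v' - u) (v - u) ≤ 0 := by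
    intro v hv v' hv' hle
    have h1 : ⟪v - u, e⟫ < 0 := hneg v hv
    have h2 : ⟪v' - u, e⟫ < 0 := hneg v' hv'
    have hid := crossid e (v' - u) (v - u)
    rw [ht] at hle
    simp only at hle
    rw [div_le_div_iff₀ (by linarith) (by linarith)] at hle
    nlinarith [hle, hid, hee]
  obtain ⟨vb, hvbW, hvb⟩ := W.exists_max_image t hWne
  obtain ⟨va, hvaW, hva⟩ := W.exists_min_image t hWne
  have hvaV := (hWV va hvaW).1
  have hvbV := (hWV vb hvbW).1
  have hsupb : ∀ w ∈ V, cross (vb - u) (w - u) ≤ 0 := by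
    intro w hw
    by_cases hwu : w = u
    · subst hwu; rw [sub_self, cross_zero_right]
    · have hwW : w ∈ W := Finset.mem_erase.mpr ⟨hwu, hw⟩
      exact key w hwW vb hvbW (hvb w hwW)
  have hsupa : ∀ w ∈ V, 0 ≤ cross (va - u) (w - u) := by
    intro w hw
    by_cases hwu : w = u
    · subst hwu; rw [sub_self, cross_zero_right]
    · have hwW : w ∈ W := Finset.mem_erase.mpr ⟨hwu, hw⟩
      have h := key va hvaW w hwW (hva w hwW)
      rw [cross_antisymm] at h
      linarith
  have hpargen : ∀ v0, v0 ∈ W → ∀ v ∈ W, cross (v0 - u) (v - u) = 0 → v = v0 := by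
    intro v0 hv0 v hv h0
    have hwbne : v0 - u ≠ 0 := by
      intro h
      have h1 := hneg v0 hv0
      rw [h, inner_zero_left] at h1
      exact lt_irrefl 0 h1
    have hp := parallel hwbne h0
    have hspos : 0 < ⟪v - u, v0 - u⟫ / ⟪v0 - u, v0 - u⟫ := by
      by_contra hle
      push_neg at hle
      have h1 : ⟪v - u, e⟫ = (⟪v - u, v0 - u⟫ / ⟪v0 - u, v0 - u⟫) * ⟪v0 - u, e⟫ := by
        conv_lhs => rw [hp]
        rw [real_inner_smul_left]
      nlinarith [hneg v hv, hneg v0 hv0, h1]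
    exact collinear_eq hVext hVsubX hu (hWV v0 hv0).1 (hWV v hv).1 (hWV v hv).2 hspos hp
  have hab : cross (va - u) (vb - u) ≠ 0 := by
    intro h0
    have hba : vb = va := hpargen va hvaW vb hvbW h0
    obtain ⟨v', hv'W, hv'ne⟩ := Finset.exists_mem_ne (s := W) (by omega) va
    have h1 : cross (va - u) (v' - u) = 0 := by
      have h2 := hsupb v' (hWV v' hv'W).1
      rw [hba] at h2
      exact le_antisymm h2 (hsupa v' (hWV v' hv'W).1)
    exact hv'ne (hpargen va hvaW v' hv'W h1)
  have habpos : 0 < cross (va - u) (vb - u) :=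
    lt_of_le_of_ne (hsupa vb hvbV) (Ne.symm hab)
  refine ⟨e, -(rot (va - u)), rot (vb - u), fun w hw hwu => he w hw hwu, ?_, ?_, ?_, ?_⟩
  · intro w hw
    have h := hsupa w hw
    have h2 : ⟪w - u, -(rot (va - u))⟫ ≤ 0 := by
      rw [inner_neg_right, inner_rot']
      linarith
    rw [inner_sub_left] at h2
    linarith
  · intro w hw
    have h := hsupb w hw
    have h2 : ⟪w - u, rot (vb - u)⟫ ≤ 0 := by rw [inner_rot']; linarith
    rw [inner_sub_left] at h2
    linarith
  · intro z hz hzc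
    by_contra hcon
    push_neg at hcon
    obtain ⟨hc1, hc2⟩ := hcon
    have hza : 0 ≤ cross (va - u) z := by
      rw [inner_neg_right, neg_nonpos, inner_rot'] at hc1
      exact hc1
    have hzb : cross (vb - u) z ≤ 0 := by
      rw [inner_rot'] at hc2
      exact hc2
    have hd := decomp (va - u) (vb - u) z hab
    have hwaz : ⟪va - u, z⟫ ≤ 0 := hzc va hvaV
    have hwbz : ⟪vb - u, z⟫ ≤ 0 := hzc vb hvbV
    have ha : 0 ≤ cross z (vb - u) / cross (va - u) (vb - u) := by
      apply div_nonneg _ (le_of_lt habpos)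
      rw [cross_antisymm]; linarith
    have hb : 0 ≤ cross (va - u) z / cross (va - u) (vb - u) :=
      div_nonneg hza (le_of_lt habpos)
    have hcomb : ⟪(cross z (vb - u) / cross (va - u) (vb - u)) • (va - u) +
        (cross (va - u) z / cross (va - u) (vb - u)) • (vb - u), z⟫ ≤ 0 := by
      rw [inner_add_left, real_inner_smul_left, real_inner_smul_left]
      nlinarith [ha, hb, hwaz, hwbz]
    rw [← hd] at hcomb
    exact hz (real_inner_self_nonpos.mp hcomb)
  · intro v hv hvu hsup
    have hvW : v ∈ W := Finset.mem_erase.mpr ⟨hvu, hv⟩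
    have h1 : cross (v - u) (vb - u) ≤ 0 := by
      have := hsup vb hvbV
      rw [inner_rot'] at this
      have h3 : cross (v - u) (vb - u) ≤ 0 := this
      exact h3
    have h2 : cross (vb - u) (v - u) ≤ 0 := hsupb v hv
    have h0 : cross (vb - u) (v - u) = 0 := by
      rw [cross_antisymm] at h1
      linarith
    have : v = vb := hpargen vb hvbW v hvW h0
    rw [this]
lemma rot_zero : rot (0 : E2) = 0 := by
  ext i
  fin_cases i
  · show -(0:ℝ) = (0:ℝ)
    norm_num
  · rfl

lemma rot_neg (x : E2) : rot (-x) = -(rot x) := by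
  ext i
  fin_cases i <;> rfl

lemma rot_rot (x : E2) : rot (rot x) = -x := by
  ext i
  fin_cases i
  · show -(x 0) = _ ; rfl
  · show -(x 1) = _ ; rfl

lemma proj_exists {X : Set E2} (hne : X.Nonempty) (hconv : Convex ℝ X)
    (hcomp : IsCompact X) (p : E2) : ∃ q ∈ X, ∀ x ∈ X, ⟪p - q, x - q⟫ ≤ 0 := by
  obtain ⟨q, hqX, hq⟩ := exists_norm_eq_iInf_of_complete_convex hne hcomp.isComplete hconv p
  exact ⟨q, hqX, (norm_eq_iInf_iff_real_inner_le_zero hconv hqX).mp hq⟩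

lemma cut_lemma {X : Set E2} {V : Finset E2}
    (hVX : (V : Set E2) = Set.extremePoints ℝ X)
    (hXV : X = convexHull ℝ (V : Set E2))
    (hcard : 3 ≤ V.card) {n1 n2 : E2 → E2}
    (hcone : ∀ u ∈ V, ∀ z : E2, z ≠ 0 → (∀ w ∈ V, ⟪w - u, z⟫ ≤ 0) →
      0 < ⟪z, n1 u⟫ ∨ 0 < ⟪z, n2 u⟫)
    (hedge : ∀ u ∈ V, ∀ v ∈ V, v ≠ u → (∀ w ∈ V, ⟪w - u, rot (v - u)⟫ ≤ 0) →
      rot (v - u) = n2 u)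
    {p : E2} (hp : p ∉ X) :
    ∃ u ∈ V, ⟪u, n1 u⟫ < ⟪p, n1 u⟫ ∨ ⟪u, n2 u⟫ < ⟪p, n2 u⟫ := by
  classical
  have hVne : V.Nonempty := Finset.card_pos.mp (by omega)
  have hVsubX : (V : Set E2) ⊆ X := hXV ▸ subset_convexHull ℝ _
  have hXne : X.Nonempty := hVne.to_set.mono hVsubX
  have hXconv : Convex ℝ X := hXV ▸ convex_convexHull ℝ _
  have hXcomp : IsCompact X := hXV ▸ V.finite_toSet.isCompact_convexHull ℝ
  obtain ⟨q, hqX, hq⟩ := proj_exists hXne hXconv hXcomp p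
  set d := p - q with hd
  have hdne : d ≠ 0 := sub_ne_zero.mpr (fun h => hp (h ▸ hqX))
  have hqmax : ∀ x ∈ X, ⟪x, d⟫ ≤ ⟪q, d⟫ := by
    intro x hx
    have h := hq x hx
    rw [real_inner_comm] at h
    rw [← sub_nonpos, ← inner_sub_left]
    exact h
  have hpd : ⟪q, d⟫ < ⟪p, d⟫ := by
    have h2 : (0:ℝ) < ⟪d, d⟫ := inner_self_pos' hdne
    rw [hd, inner_sub_left] at h2
    show ⟪q, d⟫ < ⟪p, d⟫
    rw [hd]
    linarith
  set M := V.filter (fun w => ⟪w, d⟫ = ⟪q, d⟫) with hM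
  have hqM : q ∈ convexHull ℝ (M : Set E2) := by
    apply mem_face (hXV ▸ hqX) (fun w hw => hqmax w (hVsubX hw)) rfl
  have hMne : M.Nonempty := by
    by_contra hcon
    rw [Finset.not_nonempty_iff_eq_empty] at hcon
    rw [hcon] at hqM
    simp at hqM
  -- main auxiliary: two distinct maximizers with positive coefficient
  have main : ∀ u v : E2, u ∈ V → v ∈ V → v ≠ u → ⟪u, d⟫ = ⟪q, d⟫ → ∀ c : ℝ, 0 < c →
      d = c • rot (v - u) → ⟪u, n2 u⟫ < ⟪p, n2 u⟫ := by
    intro u v hu hv hvu hud c hc hdc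
    have hsup : ∀ w ∈ V, ⟪w - u, rot (v - u)⟫ ≤ 0 := by
      intro w hw
      have h1 : ⟪w - u, d⟫ ≤ 0 := by
        rw [inner_sub_left]
        have := hqmax w (hVsubX hw)
        linarith [hud]
      rw [hdc, real_inner_smul_right] at h1
      nlinarith
    have hn2 := hedge u hu v hv hvu hsup
    have hpu : 0 < ⟪p - u, d⟫ := by
      rw [inner_sub_left]
      linarith [hud, hpd]
    rw [hdc, real_inner_smul_right] at hpu
    have : 0 < ⟪p - u, rot (v - u)⟫ := by nlinarith
    rw [inner_sub_left, hn2] at this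
    linarith
  by_cases hM1 : M.card = 1
  · -- q is a vertex
    obtain ⟨u, hMu⟩ := Finset.card_eq_one.mp hM1
    have huM : u ∈ M := by rw [hMu]; exact Finset.mem_singleton_self u
    have huV : u ∈ V := (Finset.mem_filter.mp huM).1
    have hqu : q = u := by
      rw [hMu] at hqM
      simpa [convexHull_singleton] using hqM
    have hzc : ∀ w ∈ V, ⟪w - u, d⟫ ≤ 0 := by
      intro w hw
      rw [inner_sub_left]
      have h1 := hqmax w (hVsubX hw)
      rw [hqu] at h1
      linarith
    rcases hcone u huV d hdne hzc with h | h
    · refine ⟨u, huV, Or.inl ?_⟩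
      rw [hd, hqu, inner_sub_left] at h
      linarith
    · refine ⟨u, huV, Or.inr ?_⟩
      rw [hd, hqu, inner_sub_left] at h
      linarith
  · -- at least two maximizers
    have h2 : 1 < M.card := by
      have := Finset.card_pos.mpr hMne
      omega
    obtain ⟨u, huM, v, hvM, huv⟩ := Finset.one_lt_card.mp h2
    have huV : u ∈ V := (Finset.mem_filter.mp huM).1
    have hvV : v ∈ V := (Finset.mem_filter.mp hvM).1
    have hud : ⟪u, d⟫ = ⟪q, d⟫ := (Finset.mem_filter.mp huM).2
    have hvd : ⟪v, d⟫ = ⟪q, d⟫ := (Finset.mem_filter.mp hvM).2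
    have hvu : v ≠ u := Ne.symm huv
    have hzne : v - u ≠ 0 := sub_ne_zero.mpr hvu
    have hrotne : rot (v - u) ≠ 0 := by
      intro h
      have h3 := congrArg rot h
      rw [rot_rot, rot_zero] at h3
      exact hzne (by rw [← neg_neg (v - u), h3, neg_zero])
    have hcr : cross (rot (v - u)) d = 0 := by
      rw [← inner_rot, rot_rot, inner_neg_left, inner_sub_left]
      rw [hud, hvd]
      ring
    have hdecomp := parallel hrotne hcr
    set c := ⟪d, rot (v - u)⟫ / ⟪rot (v - u), rot (v - u)⟫ with hc
    have hcne : c ≠ 0 := by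
      intro h
      rw [h, zero_smul] at hdecomp
      exact hdne hdecomp
    rcases lt_or_gt_of_ne hcne with hneg | hpos
    · -- c < 0 : use vertex v
      have hd2 : d = (-c) • rot (u - v) := by
        rw [show u - v = -(v - u) from (neg_sub v u).symm, rot_neg, smul_neg, neg_smul,
          neg_neg]
        exact hdecomp
      exact ⟨v, hvV, Or.inr (main v u hvV huV huv hvd (-c) (by linarith) hd2)⟩
    · exact ⟨u, huV, Or.inr (main u v huV hvV hvu hud c hpos hdecomp)⟩
noncomputable instance : DecidableEq (EuclideanSpace ℝ (Fin 2)) := Classical.decEq _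

lemma card_triple_le (a b c : E2) : ({a, b, c} : Finset E2).card ≤ 3 := by
  classical
  apply (Finset.card_insert_le _ _).trans
  apply Nat.succ_le_succ
  apply (Finset.card_insert_le _ _).trans
  apply Nat.succ_le_succ
  simp

lemma det_case3 {X : Set E2} {V : Finset E2}
    (hVX : (V : Set E2) = Set.extremePoints ℝ X)
    (hXV : X = convexHull ℝ (V : Set E2))
    (hcard : 3 ≤ V.card) :
    ∃ D : Finset E2, D.card ≤ 3 * V.card ∧ Determines {Y | IsPolytope Y} D X := by
  classical
  have hVne : V.Nonempty := Finset.card_pos.mp (by omega)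
  have hVsubX : (V : Set E2) ⊆ X := hXV ▸ subset_convexHull ℝ _
  have hdata := fun (u : E2) (hu : u ∈ V) => vertex_data hVX hXV hcard hu
  choose! e n1 n2 hexp hs1 hs2 hcone hedge using hdata
  refine ⟨V.biUnion (fun u => {e u, n1 u, n2 u}), ?_, ?_⟩
  · apply Finset.card_biUnion_le.trans
    calc ∑ u ∈ V, ({e u, n1 u, n2 u} : Finset E2).card
        ≤ ∑ _u ∈ V, 3 := Finset.sum_le_sum (fun u _ => card_triple_le _ _ _)
      _ = 3 * V.card := by rw [Finset.sum_const, smul_eq_mul, mul_comm]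
  · intro Y hY hsupp
    obtain ⟨G, hGne, hYG⟩ := hY
    have hYconv : Convex ℝ Y := hYG ▸ convex_convexHull ℝ _
    -- supp X values
    have hsX1 : ∀ u ∈ V, supp X (n1 u) = ⟪u, n1 u⟫ := by
      intro u hu
      rw [hXV, supp_hull hVne]
      exact le_antisymm (Finset.sup'_le _ _ (fun w hw => hs1 u hu w hw))
        (Finset.le_sup' (fun v => ⟪v, n1 u⟫) hu)
    have hsX2 : ∀ u ∈ V, supp X (n2 u) = ⟪u, n2 u⟫ := by
      intro u hu
      rw [hXV, supp_hull hVne]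
      exact le_antisymm (Finset.sup'_le _ _ (fun w hw => hs2 u hu w hw))
        (Finset.le_sup' (fun v => ⟪v, n2 u⟫) hu)
    have hsXe : ∀ u ∈ V, supp X (e u) = ⟪u, e u⟫ := by
      intro u hu
      rw [hXV, supp_hull hVne]
      refine le_antisymm (Finset.sup'_le _ _ (fun w hw => ?_))
        (Finset.le_sup' (fun v => ⟪v, e u⟫) hu)
      by_cases hwu : w = u
      · subst hwu; exact le_refl _
      · exact le_of_lt (hexp u hu w hw hwu)
    have hmem1 : ∀ u ∈ V, n1 u ∈ V.biUnion (fun u => ({e u, n1 u, n2 u} : Finset E2)) := by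
      intro u hu
      exact Finset.mem_biUnion.mpr ⟨u, hu, by simp⟩
    have hmem2 : ∀ u ∈ V, n2 u ∈ V.biUnion (fun u => ({e u, n1 u, n2 u} : Finset E2)) := by
      intro u hu
      exact Finset.mem_biUnion.mpr ⟨u, hu, by simp⟩
    have hmeme : ∀ u ∈ V, e u ∈ V.biUnion (fun u => ({e u, n1 u, n2 u} : Finset E2)) := by
      intro u hu
      exact Finset.mem_biUnion.mpr ⟨u, hu, by simp⟩
    -- Y ⊆ X
    have hYX : Y ⊆ X := by
      intro y hy
      by_contra hyX
      obtain ⟨u, hu, hcut⟩ := cut_lemma hVX hXV hcard hcone hedge hyX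
      have hbound : ∀ dd : E2, dd ∈ V.biUnion (fun u => ({e u, n1 u, n2 u} : Finset E2)) →
          ⟪y, dd⟫ ≤ supp X dd := by
        intro dd hdd
        rw [← hsupp dd hdd, hYG, supp_hull hGne]
        exact hull_inner_le hGne dd (hYG ▸ hy)
      rcases hcut with h | h
      · have := hbound (n1 u) (hmem1 u hu)
        rw [hsX1 u hu] at this
        linarith
      · have := hbound (n2 u) (hmem2 u hu)
        rw [hsX2 u hu] at this
        linarith
    -- V ⊆ Y
    have hVY : (V : Set E2) ⊆ Y := by
      intro v hv
      have hvV : v ∈ V := hv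
      obtain ⟨y, hyG, hyeq⟩ := supp_attained hGne (e v)
      have hyY : y ∈ Y := hYG ▸ subset_convexHull ℝ _ hyG
      have hyX : y ∈ X := hYX hyY
      have hymax : ⟪y, e v⟫ = ⟪v, e v⟫ := by
        rw [hyeq, ← hYG, hsupp (e v) (hmeme v hvV), hsXe v hvV]
      have hub : ∀ w ∈ V, ⟪w, e v⟫ ≤ ⟪v, e v⟫ := by
        intro w hw
        by_cases hwv : w = v
        · subst hwv; exact le_refl _
        · exact le_of_lt (hexp v hvV w hw hwv)
      have hface := mem_face (hXV ▸ hyX) hub hymax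
      have hfilter : V.filter (fun w => ⟪w, e v⟫ = ⟪v, e v⟫) = {v} := by
        apply Finset.ext
        intro w
        rw [Finset.mem_filter, Finset.mem_singleton]
        constructor
        · rintro ⟨hwV, hweq⟩
          by_contra hwv
          exact absurd hweq (ne_of_lt (hexp v hvV w hwV hwv))
        · rintro rfl
          exact ⟨hvV, rfl⟩
      rw [hfilter] at hface
      simp only [Finset.coe_singleton, convexHull_singleton, Set.mem_singleton_iff] at hface
      rw [← hface]
      exact hyY
    have hXY : X ⊆ Y := by
      rw [hXV]
      exact convexHull_min hVY hYconv
    exact Set.Subset.antisymm hYX hXY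
lemma supp_singleton (v d : E2) : supp {v} d = ⟪v, d⟫ := by
  unfold supp
  rw [Set.image_singleton, csSup_singleton]

lemma cross_self' (x : E2) : cross x x = 0 := by unfold cross; ring

lemma det_case1 {X : Set E2} {v : E2} (hXv : X = {v}) :
    ∃ D : Finset E2, D.card ≤ 4 ∧ Determines {Y | IsPolytope Y} D X := by
  classical
  set b0 : E2 := EuclideanSpace.single (0 : Fin 2) (1:ℝ) with hb0
  set b1 : E2 := EuclideanSpace.single (1 : Fin 2) (1:ℝ) with hb1
  have hxb0 : ∀ x : E2, ⟪x, b0⟫ = x 0 := by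
    intro x
    rw [inner2, hb0]
    simp [EuclideanSpace.single_apply]
  have hxb1 : ∀ x : E2, ⟪x, b1⟫ = x 1 := by
    intro x
    rw [inner2, hb1]
    simp [EuclideanSpace.single_apply]
  refine ⟨{b0, -b0, b1, -b1}, ?_, ?_⟩
  · apply (Finset.card_insert_le _ _).trans
    apply Nat.succ_le_succ
    apply (Finset.card_insert_le _ _).trans
    apply Nat.succ_le_succ
    apply (Finset.card_insert_le _ _).trans
    apply Nat.succ_le_succ
    simp
  · intro Y hY hsupp
    obtain ⟨G, hGne, hYG⟩ := hY
    have hbound : ∀ dd ∈ ({b0, -b0, b1, -b1} : Finset E2), ∀ y ∈ Y, ⟪y, dd⟫ ≤ ⟪v, dd⟫ := by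
      intro dd hdd y hy
      have h1 := hsupp dd hdd
      rw [hXv, supp_singleton] at h1
      rw [← h1, hYG, supp_hull hGne]
      exact hull_inner_le hGne dd (hYG ▸ hy)
    have hyv : ∀ y ∈ Y, y = v := by
      intro y hy
      have h0 := hbound b0 (by simp) y hy
      have h0' := hbound (-b0) (by simp) y hy
      have h1 := hbound b1 (by simp) y hy
      have h1' := hbound (-b1) (by simp) y hy
      simp only [inner_neg_right, hxb0, hxb1] at h0 h0' h1 h1'
      ext i
      fin_cases i
      · show y 0 = v 0
        linarith
      · show y 1 = v 1
        linarith
    have hYne : Y.Nonempty := by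
      obtain ⟨g, hg⟩ := hGne
      exact ⟨g, hYG ▸ subset_convexHull ℝ _ hg⟩
    rw [hXv]
    exact Set.eq_singleton_iff_nonempty_unique_mem.mpr ⟨hYne, hyv⟩

lemma det_case2 {X : Set E2} {V : Finset E2}
    (hVX : (V : Set E2) = Set.extremePoints ℝ X)
    (hXV : X = convexHull ℝ (V : Set E2))
    (hcard : V.card = 2) :
    ∃ D : Finset E2, D.card ≤ 7 ∧ Determines {Y | IsPolytope Y} D X := by
  classical
  obtain ⟨a, b, hab, hV⟩ := Finset.card_eq_two.mp hcard
  have haV : a ∈ V := by rw [hV]; simp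
  have hbV : b ∈ V := by rw [hV]; simp
  have hVne : V.Nonempty := ⟨a, haV⟩
  obtain ⟨ea, hea⟩ := exposing hVX hXV haV
  obtain ⟨eb, heb⟩ := exposing hVX hXV hbV
  have hexpa : ⟪b, ea⟫ < ⟪a, ea⟫ := hea b hbV (Ne.symm hab)
  have hexpb : ⟪a, eb⟫ < ⟪b, eb⟫ := heb a haV hab
  have hbane : b - a ≠ 0 := sub_ne_zero.mpr (Ne.symm hab)
  set n : E2 := rot (b - a) with hn
  have hnab : ⟪b - a, n⟫ = 0 := by rw [hn, inner_rot', cross_self']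
  have hban : ⟪b, n⟫ = ⟪a, n⟫ := by
    rw [inner_sub_left] at hnab
    linarith
  -- supp values
  have hsn : supp X n = ⟪a, n⟫ := by
    rw [hXV, supp_hull hVne]
    apply le_antisymm
    · apply Finset.sup'_le
      intro w hw
      rw [hV, Finset.mem_insert, Finset.mem_singleton] at hw
      rcases hw with rfl | rfl
      · exact le_refl _
      · exact le_of_eq hban
    · exact Finset.le_sup' (fun v => ⟪v, n⟫) haV
  have hsnn : supp X (-n) = ⟪a, -n⟫ := by
    rw [hXV, supp_hull hVne]
    apply le_antisymm
    · apply Finset.sup'_le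
      intro w hw
      rw [hV, Finset.mem_insert, Finset.mem_singleton] at hw
      rcases hw with rfl | rfl
      · exact le_refl _
      · rw [inner_neg_right, inner_neg_right]
        linarith
    · exact Finset.le_sup' (fun v => ⟪v, -n⟫) haV
  have hsea : supp X ea = ⟪a, ea⟫ := by
    rw [hXV, supp_hull hVne]
    apply le_antisymm
    · apply Finset.sup'_le
      intro w hw
      by_cases hwa : w = a
      · subst hwa; exact le_refl _
      · exact le_of_lt (hea w hw hwa)
    · exact Finset.le_sup' (fun v => ⟪v, ea⟫) haV
  have hseb : supp X eb = ⟪b, eb⟫ := by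
    rw [hXV, supp_hull hVne]
    apply le_antisymm
    · apply Finset.sup'_le
      intro w hw
      by_cases hwb : w = b
      · subst hwb; exact le_refl _
      · exact le_of_lt (heb w hw hwb)
    · exact Finset.le_sup' (fun v => ⟪v, eb⟫) hbV
  refine ⟨{ea, eb, n, -n}, ?_, ?_⟩
  · apply (Finset.card_insert_le _ _).trans
    apply Nat.succ_le_succ
    apply (Finset.card_insert_le _ _).trans
    apply Nat.succ_le_succ
    apply (Finset.card_insert_le _ _).trans
    apply Nat.succ_le_succ
    simp
  · intro Y hY hsupp
    obtain ⟨G, hGne, hYG⟩ := hY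
    have hYconv : Convex ℝ Y := hYG ▸ convex_convexHull ℝ _
    have hbound : ∀ dd ∈ ({ea, eb, n, -n} : Finset E2), ∀ y ∈ Y, ⟪y, dd⟫ ≤ supp X dd := by
      intro dd hdd y hy
      rw [← hsupp dd hdd, hYG, supp_hull hGne]
      exact hull_inner_le hGne dd (hYG ▸ hy)
    have hline : ∀ y ∈ Y, ⟪y, n⟫ = ⟪a, n⟫ := by
      intro y hy
      have h1 := hbound n (by simp) y hy
      have h2 := hbound (-n) (by simp) y hy
      rw [hsn] at h1
      rw [hsnn, inner_neg_right, inner_neg_right] at h2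
      linarith
    -- uniqueness on the line
    have huniq : ∀ c y ec : E2, ⟪y - c, n⟫ = 0 → ⟪y - c, ec⟫ = 0 → ⟪b - a, ec⟫ ≠ 0 → y = c := by
      intro c y ec h1 h2 h3
      have hcr : cross (b - a) (y - c) = 0 := by
        rw [hn, inner_rot'] at h1
        exact h1
      have hpar := parallel hbane hcr
      have hmul : (0:ℝ) = ⟪y - c, b - a⟫ / ⟪b - a, b - a⟫ * ⟪b - a, ec⟫ := by
        rw [← h2]
        conv_lhs => rw [hpar]
        rw [real_inner_smul_left]
      rcases mul_eq_zero.mp hmul.symm with h | h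
      · have : y - c = 0 := by rw [hpar, h, zero_smul]
        exact sub_eq_zero.mp this
      · exact absurd h h3
    have hbY : b ∈ Y := by
      obtain ⟨y, hyG, hyeq⟩ := supp_attained hGne eb
      have hyY : y ∈ Y := hYG ▸ subset_convexHull ℝ _ hyG
      have hyeb : ⟪y, eb⟫ = ⟪b, eb⟫ := by
        rw [hyeq, ← hYG, hsupp eb (by simp), hseb]
      have h1 : ⟪y - b, n⟫ = 0 := by
        rw [inner_sub_left, hline y hyY, hban, sub_self]
      have h2 : ⟪y - b, eb⟫ = 0 := by rw [inner_sub_left, hyeb, sub_self]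
      have h3 : ⟪b - a, eb⟫ ≠ 0 := by
        have : (0:ℝ) < ⟪b - a, eb⟫ := by rw [inner_sub_left]; linarith
        exact ne_of_gt this
      rw [huniq b y eb h1 h2 h3] at hyY
      exact hyY
    have haY : a ∈ Y := by
      obtain ⟨y, hyG, hyeq⟩ := supp_attained hGne ea
      have hyY : y ∈ Y := hYG ▸ subset_convexHull ℝ _ hyG
      have hyea : ⟪y, ea⟫ = ⟪a, ea⟫ := by
        rw [hyeq, ← hYG, hsupp ea (by simp), hsea]
      have h1 : ⟪y - a, n⟫ = 0 := by
        rw [inner_sub_left, hline y hyY, sub_self]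
      have h2 : ⟪y - a, ea⟫ = 0 := by rw [inner_sub_left, hyea, sub_self]
      have h3 : ⟪b - a, ea⟫ ≠ 0 := by
        have : ⟪b - a, ea⟫ < 0 := by rw [inner_sub_left]; linarith
        exact ne_of_lt this
      rw [huniq a y ea h1 h2 h3] at hyY
      exact hyY
    have hXY : X ⊆ Y := by
      rw [hXV]
      apply convexHull_min _ hYconv
      intro w hw
      rw [hV] at hw
      simp only [Finset.coe_insert, Finset.coe_singleton, Set.mem_insert_iff,
        Set.mem_singleton_iff] at hw
      rcases hw with rfl | rfl
      · exact haY
      · exact hbY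
    have hYX : Y ⊆ X := by
      intro y hy
      have h1 : ⟪y - a, n⟫ = 0 := by
        rw [inner_sub_left, hline y hy, sub_self]
      have hcr : cross (b - a) (y - a) = 0 := by
        rw [hn, inner_rot'] at h1
        exact h1
      have hpar := parallel hbane hcr
      set s := ⟪y - a, b - a⟫ / ⟪b - a, b - a⟫ with hs
      have hyea := hbound ea (by simp) y hy
      rw [hsea] at hyea
      have hyeb := hbound eb (by simp) y hy
      rw [hseb] at hyeb
      have hba_ea : ⟪b - a, ea⟫ < 0 := by rw [inner_sub_left]; linarith
      have hba_eb : (0:ℝ) < ⟪b - a, eb⟫ := by rw [inner_sub_left]; linarith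
      have hs0 : 0 ≤ s := by
        have h2 : ⟪y - a, ea⟫ ≤ 0 := by rw [inner_sub_left]; linarith
        have h4 : ⟪y - a, ea⟫ = s * ⟪b - a, ea⟫ := by
          conv_lhs => rw [hpar]
          rw [real_inner_smul_left]
        nlinarith
      have hs1 : s ≤ 1 := by
        have h2 : ⟪y - b, eb⟫ ≤ 0 := by rw [inner_sub_left]; linarith
        have h4 : y - b = (s - 1) • (b - a) := by
          have h5 : y - b = (y - a) - (b - a) := by abel
          rw [h5, hpar, sub_smul, one_smul]
        have h6 : ⟪y - b, eb⟫ = (s - 1) * ⟪b - a, eb⟫ := by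
          rw [h4, real_inner_smul_left]
        nlinarith
      rw [hXV, hV]
      have hcoe : ((({a, b} : Finset E2)) : Set E2) = {a, b} := by simp
      rw [hcoe, convexHull_pair]
      refine ⟨1 - s, s, by linarith, by linarith, by ring, ?_⟩
      have hy' : y = s • (b - a) + a := by rw [← hpar]; abel
      rw [hy', smul_sub, sub_smul, one_smul]
      abel
    exact Set.Subset.antisymm hYX hXY
/-- a polytope `X ⊆ ℝ²` with exactly `n_v` vertices is determined by at
most `3 n_v + 1` directions within the class of all polytopes in `ℝ²`. -/
theorem stmt_3 (n_v : ℕ) (X : Set (EuclideanSpace ℝ (Fin 2))) (hX : IsPolytope X)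
    (hcard : (Set.extremePoints ℝ X).ncard = n_v) :
    ∃ D : Finset (EuclideanSpace ℝ (Fin 2)), D.card ≤ 3 * n_v + 1 ∧
      Determines {Y | IsPolytope Y} D X := by
  obtain ⟨V, hVne, hVX, hXV⟩ := polytope_eq_hull_extreme hX
  have hncard : V.card = n_v := by
    rw [← hcard, ← hVX, Set.ncard_coe_finset]
  rcases Nat.lt_or_ge V.card 3 with h3 | h3
  · have h1 : V.card = 1 ∨ V.card = 2 := by
      have := Finset.card_pos.mpr hVne
      omega
    rcases h1 with h1 | h2
    · obtain ⟨v, hV⟩ := Finset.card_eq_one.mp h1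
      have hXv : X = {v} := by
        rw [hXV, hV]
        simp [convexHull_singleton]
      obtain ⟨D, hD, hdet⟩ := det_case1 hXv
      exact ⟨D, by omega, hdet⟩
    · obtain ⟨D, hD, hdet⟩ := det_case2 hVX hXV h2
      exact ⟨D, by omega, hdet⟩
  · obtain ⟨D, hD, hdet⟩ := det_case3 hVX hXV h3
    exact ⟨D, by omega, hdet⟩
end

section
/- Let X ⊆ ℝ² be a polytope whose set V of vertices (extreme points) has cardinality n_v ≥ 1, and let W ⊆ V with |W| = n_v - 1 (the already-identified vertices). Let d¹, d² ∈ ℝ² be linearly independent directions whose generated support lines L(dⁱ) = { v ∈ ℝ² : ⟨v, dⁱ⟩ = h_X(dⁱ) } contain no point of W, for i = 1, 2. Then the unique vertex in V \ W is the unique intersection point of L(d¹) and L(d²). (This is the geometric content of the improved stopping rule: when n_v - 1 vertices are identified and two supporting edges are not adjacent to any known vertex, their intersection must be the final vertex.) -/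
open RealInnerProductSpace

/-- There is an extreme point of a nonempty compact set maximizing `⟪·, d⟫`. -/
lemma exists_extreme_max {n : ℕ} {X : Set (EuclideanSpace ℝ (Fin n))}
    (hc : IsCompact X) (hne : X.Nonempty) (d : EuclideanSpace ℝ (Fin n)) :
    ∃ v ∈ Set.extremePoints ℝ X, ∀ x ∈ X, ⟪x, d⟫ ≤ ⟪v, d⟫ := by
  set l : EuclideanSpace ℝ (Fin n) →L[ℝ] ℝ := innerSL ℝ d with hl
  have h : IsExposed ℝ X ({ y ∈ X | ∀ z ∈ X, l z ≤ l y }) := fun _ => ⟨l, rfl⟩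
  obtain ⟨z, hzA, hz⟩ := hc.exists_isMaxOn hne l.continuous.continuousOn
  obtain ⟨y, hy⟩ := (h.isCompact hc).extremePoints_nonempty ⟨z, hzA, fun w hw => hz hw⟩
  refine ⟨y, h.isExtreme.extremePoints_subset_extremePoints hy, fun x hx => ?_⟩
  have := hy.1.2 x hx
  rw [hl] at this
  simp only [innerSL_apply_apply] at this
  rwa [real_inner_comm d x, real_inner_comm d y]

lemma supp_eq_of_max {n : ℕ} {X : Set (EuclideanSpace ℝ (Fin n))} {v : EuclideanSpace ℝ (Fin n)}
    (hv : v ∈ X) (d : EuclideanSpace ℝ (Fin n)) (hmax : ∀ x ∈ X, ⟪x, d⟫ ≤ ⟪v, d⟫) :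
    supp X d = ⟪v, d⟫ := by
  apply le_antisymm
  · exact csSup_le ⟨_, Set.mem_image_of_mem _ hv⟩ (by rintro r ⟨x, hx, rfl⟩; exact hmax x hx)
  · exact le_csSup ⟨⟪v, d⟫, by rintro r ⟨x, hx, rfl⟩; exact hmax x hx⟩
      (Set.mem_image_of_mem _ hv)

/-- Two independent linear equations determine a unique point in `ℝ²`. -/
lemma eq_of_inner_eq {d1 d2 x y : EuclideanSpace ℝ (Fin 2)}
    (hind : LinearIndependent ℝ ![d1, d2])
    (e1 : ⟪x, d1⟫ = ⟪y, d1⟫) (e2 : ⟪x, d2⟫ = ⟪y, d2⟫) : x = y := by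
  have hspan : Submodule.span ℝ (Set.range ![d1, d2]) = ⊤ :=
    hind.span_eq_top_of_card_eq_finrank (by simp [finrank_euclideanSpace])
  have key : ∀ u : EuclideanSpace ℝ (Fin 2), ⟪x - y, u⟫ = 0 := by
    intro u
    have hu : u ∈ Submodule.span ℝ (Set.range ![d1, d2]) := hspan ▸ Submodule.mem_top
    induction hu using Submodule.span_induction with
    | mem w hw =>
      obtain ⟨i, rfl⟩ := hw
      have hd : ![d1, d2] i = d1 ∨ ![d1, d2] i = d2 := by fin_cases i <;> simp
      rcases hd with h | h <;> rw [h, inner_sub_left]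
      · linarith
      · linarith
    | zero => simp
    | add a b _ _ ha hb => rw [inner_add_right, ha, hb, add_zero]
    | smul c a _ ha => rw [real_inner_smul_right, ha, mul_zero]
  have : x - y = 0 := by
    have := key (x - y)
    rwa [inner_self_eq_zero] at this
  exact sub_eq_zero.mp this

/-- improved stopping rule: if `W` consists of `n_v - 1` of the `n_v`
vertices of the polytope `X ⊆ ℝ²`, and `d¹, d²` are linearly independent directions
whose generated support lines `L(dⁱ) = {v : ⟪v, dⁱ⟫ = h_X(dⁱ)}` contain no point of `W`,
then the unique remaining vertex is the unique intersection point of the two lines,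
i.e. `V \ W = L(d¹) ∩ L(d²)`. -/
theorem stmt_4 (n_v : ℕ) (hnv : 1 ≤ n_v) (X : Set (EuclideanSpace ℝ (Fin 2)))
    (hX : IsPolytope X)
    (V : Set (EuclideanSpace ℝ (Fin 2))) (hV : V = Set.extremePoints ℝ X)
    (hVcard : V.ncard = n_v)
    (W : Set (EuclideanSpace ℝ (Fin 2))) (hWV : W ⊆ V) (hWcard : W.ncard = n_v - 1)
    (d1 d2 : EuclideanSpace ℝ (Fin 2)) (hind : LinearIndependent ℝ ![d1, d2])
    (h1 : ∀ w ∈ W, ⟪w, d1⟫ ≠ supp X d1)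
    (h2 : ∀ w ∈ W, ⟪w, d2⟫ ≠ supp X d2) :
    V \ W = {v | ⟪v, d1⟫ = supp X d1} ∩ {v | ⟪v, d2⟫ = supp X d2} := by
  obtain ⟨F, hFne, rfl⟩ := hX
  have hc : IsCompact (convexHull ℝ (F : Set (EuclideanSpace ℝ (Fin 2)))) := F.finite_toSet.isCompact_convexHull ℝ
  have hne : (convexHull ℝ (F : Set (EuclideanSpace ℝ (Fin 2)))).Nonempty := hFne.to_set.convexHull (𝕜 := ℝ)
  -- V is finite
  have hVfin : V.Finite := by
    rw [hV]; exact F.finite_toSet.subset extremePoints_convexHull_subset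
  have hWfin : W.Finite := hVfin.subset hWV
  -- V \ W is a singleton
  have hcard : (V \ W).ncard = 1 := by
    rw [Set.ncard_diff hWV hWfin, hVcard, hWcard]
    omega
  obtain ⟨v0, hv0⟩ := Set.ncard_eq_one.mp hcard
  -- extreme maximizers for d1 and d2
  obtain ⟨u1, hu1V, hu1max⟩ := exists_extreme_max hc hne d1
  obtain ⟨u2, hu2V, hu2max⟩ := exists_extreme_max hc hne d2
  have hs1 : supp (convexHull ℝ (F : Set _)) d1 = ⟪u1, d1⟫ :=
    supp_eq_of_max (extremePoints_subset hu1V) d1 hu1max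
  have hs2 : supp (convexHull ℝ (F : Set _)) d2 = ⟪u2, d2⟫ :=
    supp_eq_of_max (extremePoints_subset hu2V) d2 hu2max
  have hu1W : u1 ∉ W := fun h => h1 u1 h hs1.symm
  have hu2W : u2 ∉ W := fun h => h2 u2 h hs2.symm
  have hu1 : u1 = v0 := by
    have : u1 ∈ V \ W := ⟨hV ▸ hu1V, hu1W⟩
    rw [hv0] at this; exact this
  have hu2 : u2 = v0 := by
    have : u2 ∈ V \ W := ⟨hV ▸ hu2V, hu2W⟩
    rw [hv0] at this; exact this
  rw [hv0]
  ext x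
  constructor
  · rintro rfl
    refine ⟨?_, ?_⟩ <;> simp only [Set.mem_setOf_eq]
    · rw [hs1, hu1]
    · rw [hs2, hu2]
  · rintro ⟨hx1, hx2⟩
    have e1 : ⟪x, d1⟫ = ⟪v0, d1⟫ := by rw [hx1, hs1, hu1]
    have e2 : ⟪x, d2⟫ = ⟪v0, d2⟫ := by rw [hx2, hs2, hu2]
    exact eq_of_inner_eq hind e1 e2
end

section
/- Let X ⊆ ℝ² be a polytope with exactly 2 vertices (extreme points), i.e., a nondegenerate closed segment. Then there exists a finite set D ⊆ ℝ² of directions with |D| ≤ 5 such that D determines X within the class of all polytopes in ℝ² having at most 2 extreme points. (Special case n̄ = n_v = 2: Algorithm 1 can be terminated after just 5 oracle calls.) -/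
open RealInnerProductSpace

lemma inner_two (x y : EuclideanSpace ℝ (Fin 2)) : ⟪x, y⟫ = x 0 * y 0 + x 1 * y 1 := by
  simp [PiLp.inner_apply, RCLike.inner_apply, Fin.sum_univ_two]
  ring

lemma sq_pos_of_ne (u : EuclideanSpace ℝ (Fin 2)) (hu : u ≠ 0) : 0 < u 0 ^ 2 + u 1 ^ 2 := by
  have : u 0 ≠ 0 ∨ u 1 ≠ 0 := by
    by_contra h
    push_neg at h
    exact hu (PiLp.ext fun i => by fin_cases i <;> simp [h.1, h.2])
  rcases this with h | h <;> positivity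

lemma poly_struct {n : ℕ} {Y : Set (EuclideanSpace ℝ (Fin n))} (hY : IsPolytope Y) :
    (Set.extremePoints ℝ Y).Finite ∧ (Set.extremePoints ℝ Y).Nonempty ∧
      Y = convexHull ℝ (Set.extremePoints ℝ Y) := by
  obtain ⟨F, hF, rfl⟩ := hY
  have hsub : Set.extremePoints ℝ (convexHull ℝ (F : Set (EuclideanSpace ℝ (Fin n))))
      ⊆ (F : Set (EuclideanSpace ℝ (Fin n))) := extremePoints_convexHull_subset
  have hfin : (Set.extremePoints ℝ (convexHull ℝ (F : Set (EuclideanSpace ℝ (Fin n))))).Finite :=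
    F.finite_toSet.subset hsub
  have hKM : closure (convexHull ℝ
      (Set.extremePoints ℝ (convexHull ℝ (F : Set (EuclideanSpace ℝ (Fin n))))))
      = convexHull ℝ (F : Set (EuclideanSpace ℝ (Fin n))) :=
    closure_convexHull_extremePoints (F.finite_toSet.isCompact_convexHull ℝ)
      (convex_convexHull ℝ _)
  rw [(hfin.isClosed_convexHull ℝ).closure_eq] at hKM
  refine ⟨hfin, ?_, hKM.symm⟩
  by_contra h
  rw [Set.not_nonempty_iff_eq_empty] at h
  rw [h, convexHull_empty] at hKM
  exact (hF.to_set.mono (subset_convexHull ℝ _)).ne_empty hKM.symm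

lemma poly_seg {Y : Set (EuclideanSpace ℝ (Fin 2))} (hY : IsPolytope Y)
    (hc : (Set.extremePoints ℝ Y).ncard ≤ 2) :
    ∃ p q, Y = segment ℝ p q := by
  obtain ⟨hfin, hne, heq⟩ := poly_struct hY
  have hpos : 0 < (Set.extremePoints ℝ Y).ncard := (Set.ncard_pos hfin).mpr hne
  interval_cases h : (Set.extremePoints ℝ Y).ncard
  · obtain ⟨p, hp⟩ := Set.ncard_eq_one.mp h
    exact ⟨p, p, by rw [heq, hp, convexHull_singleton, segment_same]⟩
  · obtain ⟨p, q, -, hpq⟩ := Set.ncard_eq_two.mp h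
    exact ⟨p, q, by rw [heq, hpq, convexHull_pair]⟩

lemma supp_segment (a b d : EuclideanSpace ℝ (Fin 2)) :
    supp (segment ℝ a b) d = max ⟪a, d⟫ ⟪b, d⟫ := by
  have hf : ∃ f : EuclideanSpace ℝ (Fin 2) →ₗ[ℝ] ℝ, ∀ v, f v = ⟪v, d⟫ :=
    ⟨{ toFun := fun v => ⟪v, d⟫
       map_add' := fun x y => inner_add_left x y d
       map_smul' := fun c x => real_inner_smul_left x d c }, fun _ => rfl⟩
  obtain ⟨f, hfv⟩ := hf
  have himg : (fun v => ⟪v, d⟫) '' segment ℝ a b = segment ℝ ⟪a, d⟫ ⟪b, d⟫ := by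
    have := image_segment ℝ f.toAffineMap a b
    simpa [hfv] using this
  rw [supp, himg, segment_eq_uIcc, Set.uIcc, csSup_Icc inf_le_sup]

lemma rot_eq (u nn x y : EuclideanSpace ℝ (Fin 2)) (hu : u ≠ 0)
    (hn0 : nn 0 = -(u 1)) (hn1 : nn 1 = u 0)
    (h1 : ⟪x, u⟫ = ⟪y, u⟫) (h2 : ⟪x, nn⟫ = ⟪y, nn⟫) : x = y := by
  have hs : 0 < u 0 ^ 2 + u 1 ^ 2 := sq_pos_of_ne u hu
  rw [inner_two, inner_two] at h1 h2
  rw [hn0, hn1] at h2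
  have k0 : (x 0 - y 0) * (u 0 ^ 2 + u 1 ^ 2) = 0 := by
    linear_combination u 0 * h1 - u 1 * h2
  have k1 : (x 1 - y 1) * (u 0 ^ 2 + u 1 ^ 2) = 0 := by
    linear_combination u 1 * h1 + u 0 * h2
  have e0 : x 0 = y 0 := by
    rcases mul_eq_zero.mp k0 with h | h
    · linarith
    · exact absurd h hs.ne'
  have e1 : x 1 = y 1 := by
    rcases mul_eq_zero.mp k1 with h | h
    · linarith
    · exact absurd h hs.ne'
  ext i
  fin_cases i <;> assumption

/-- a polytope `X ⊆ ℝ²` with exactly `2` vertices (a nondegenerate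
segment) is determined by at most `5` directions within the class of polytopes
in `ℝ²` with at most `2` extreme points. -/
theorem stmt_5 (X : Set (EuclideanSpace ℝ (Fin 2))) (hX : IsPolytope X)
    (hcard : (Set.extremePoints ℝ X).ncard = 2) :
    ∃ D : Finset (EuclideanSpace ℝ (Fin 2)), D.card ≤ 5 ∧
      Determines {Y | IsPolytope Y ∧ (Set.extremePoints ℝ Y).ncard ≤ 2} D X := by
  classical
  obtain ⟨a, b, hab, hE⟩ := Set.ncard_eq_two.mp hcard
  obtain ⟨-, -, hXhull⟩ := poly_struct hX
  have hXseg : X = segment ℝ a b := by rw [hXhull, hE, convexHull_pair]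
  have hu : b - a ≠ 0 := sub_ne_zero.mpr (Ne.symm hab)
  set u : EuclideanSpace ℝ (Fin 2) := b - a with hu_def
  set nn : EuclideanSpace ℝ (Fin 2) := (WithLp.equiv 2 (Fin 2 → ℝ)).symm ![-(u 1), u 0]
    with hnn_def
  have hn0 : nn 0 = -(u 1) := by rw [hnn_def]; simp
  have hn1 : nn 1 = u 0 := by rw [hnn_def]; simp
  have hub0 : u 0 = b 0 - a 0 := by rw [hu_def]; rfl
  have hub1 : u 1 = b 1 - a 1 := by rw [hu_def]; rfl
  have hs : 0 < u 0 ^ 2 + u 1 ^ 2 := sq_pos_of_ne u hu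
  have hAB : ⟪a, u⟫ < ⟪b, u⟫ := by
    rw [inner_two, inner_two]
    have hkey : b 0 * u 0 + b 1 * u 1 - (a 0 * u 0 + a 1 * u 1) = u 0 ^ 2 + u 1 ^ 2 := by
      rw [hub0, hub1]; ring
    linarith [hs, hkey]
  have hbn : ⟪b, nn⟫ = ⟪a, nn⟫ := by
    rw [inner_two, inner_two, hn0, hn1]
    linear_combination u 1 * hub0 - u 0 * hub1
  refine ⟨{u, -u, nn, -nn}, ?_, ?_⟩
  · calc ({u, -u, nn, -nn} : Finset _).card
        ≤ ({-u, nn, -nn} : Finset _).card + 1 := Finset.card_insert_le _ _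
      _ ≤ (({nn, -nn} : Finset _).card + 1) + 1 :=
          Nat.add_le_add_right (Finset.card_insert_le _ _) 1
      _ ≤ ((({-nn} : Finset _).card + 1) + 1) + 1 :=
          Nat.add_le_add_right (Nat.add_le_add_right (Finset.card_insert_le _ _) 1) 1
      _ ≤ 5 := by simp
  · intro Y hY hsupp
    obtain ⟨p, q, hYseg⟩ := poly_seg hY.1 hY.2
    have key : ∀ d, d ∈ ({u, -u, nn, -nn} : Finset _) →
        max ⟪p, d⟫ ⟪q, d⟫ = max ⟪a, d⟫ ⟪b, d⟫ := by
      intro d hd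
      have := hsupp d hd
      rwa [hYseg, hXseg, supp_segment, supp_segment] at this
    have h1 : max ⟪p, u⟫ ⟪q, u⟫ = ⟪b, u⟫ := by
      have := key u (by simp)
      rwa [max_eq_right hAB.le] at this
    have h2 : min ⟪p, u⟫ ⟪q, u⟫ = ⟪a, u⟫ := by
      have := key (-u) (by simp)
      simp only [inner_neg_right] at this
      rw [max_neg_neg, max_neg_neg, neg_inj, min_eq_left hAB.le] at this
      exact this
    have h3 : max ⟪p, nn⟫ ⟪q, nn⟫ = ⟪a, nn⟫ := by
      have := key nn (by simp)
      rwa [hbn, max_self] at this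
    have h4 : min ⟪p, nn⟫ ⟪q, nn⟫ = ⟪a, nn⟫ := by
      have := key (-nn) (by simp)
      simp only [inner_neg_right] at this
      rw [max_neg_neg, max_neg_neg, neg_inj, hbn, min_self] at this
      exact this
    have hpn : ⟪p, nn⟫ = ⟪a, nn⟫ :=
      le_antisymm (h3 ▸ le_max_left _ _) (h4 ▸ min_le_left _ _)
    have hqn : ⟪q, nn⟫ = ⟪a, nn⟫ :=
      le_antisymm (h3 ▸ le_max_right _ _) (h4 ▸ min_le_right _ _)
    rcases le_total (⟪p, u⟫ : ℝ) ⟪q, u⟫ with hle | hle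
    · have hq : ⟪q, u⟫ = ⟪b, u⟫ := by rw [← h1, max_eq_right hle]
      have hp : ⟪p, u⟫ = ⟪a, u⟫ := by rw [← h2, min_eq_left hle]
      have hpa : p = a := rot_eq u nn p a hu hn0 hn1 hp hpn
      have hqb : q = b := rot_eq u nn q b hu hn0 hn1 hq (hqn.trans hbn.symm)
      rw [hYseg, hXseg, hpa, hqb]
    · have hp : ⟪p, u⟫ = ⟪b, u⟫ := by rw [← h1, max_eq_left hle]
      have hq : ⟪q, u⟫ = ⟪a, u⟫ := by rw [← h2, min_eq_right hle]
      have hpb : p = b := rot_eq u nn p b hu hn0 hn1 hp (hpn.trans hbn.symm)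
      have hqa : q = a := rot_eq u nn q a hu hn0 hn1 hq hqn
      rw [hYseg, hXseg, hpb, hqa, segment_symm]
end

section
/- Let D₀ = {d¹, …, dᵐ} ⊆ ℝ² be a finite set of m directions that positively spans ℝ², i.e., { Σᵢ λᵢ dⁱ : λᵢ ≥ 0 for all i } = ℝ². Let X ⊆ ℝ² be a polytope with exactly n_v vertices (extreme points). Then there exists a finite set D ⊆ ℝ² with D₀ ⊆ D and |D| ≤ 3·n_v + (m - 3) such that D determines X within the class of all polytopes in ℝ² having exactly n_v extreme points. (Lemma on replacing the initialization set of Algorithm 1: when n̄ = n_v, at most (3n_v) + (m - 3) oracle calls suffice.) -/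
open RealInnerProductSpace

namespace Stmt6Aux

abbrev E2 := EuclideanSpace ℝ (Fin 2)

noncomputable local instance : DecidableEq E2 := Classical.decEq _

attribute [local instance] Classical.propDecidable

lemma inner_coords (a b : E2) : ⟪a, b⟫ = a 0 * b 0 + a 1 * b 1 := by
  simp [PiLp.inner_apply, Fin.sum_univ_two, RCLike.inner_apply, mul_comm]

/-- 2x2 determinant of two vectors. -/
def det2 (a b : E2) : ℝ := a 0 * b 1 - a 1 * b 0

lemma eq_of_perp {a b z : E2} (hd : det2 a b ≠ 0)
    (h1 : ⟪z, a⟫ = 0) (h2 : ⟪z, b⟫ = 0) : z = 0 := by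
  rw [inner_coords] at h1 h2
  unfold det2 at hd
  have e0 : (a 0 * b 1 - a 1 * b 0) * z 0 = 0 := by linear_combination b 1 * h1 - a 1 * h2
  have e1 : (a 0 * b 1 - a 1 * b 0) * z 1 = 0 := by linear_combination a 0 * h2 - b 0 * h1
  have hz0 : z 0 = 0 := by rcases mul_eq_zero.1 e0 with h | h; exact absurd h hd; exact h
  have hz1 : z 1 = 0 := by rcases mul_eq_zero.1 e1 with h | h; exact absurd h hd; exact h
  ext i
  fin_cases i <;> simp [hz0, hz1]

/-- Rotation by 90 degrees. -/
def rot (e : E2) : E2 := WithLp.toLp 2 ![-(e 1), e 0]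

lemma rot_apply0 (e : E2) : rot e 0 = -(e 1) := rfl
lemma rot_apply1 (e : E2) : rot e 1 = e 0 := rfl

lemma coords_ne_zero {p : E2} (h : p ≠ 0) : p 0 ≠ 0 ∨ p 1 ≠ 0 := by
  by_contra hc
  push_neg at hc
  exact h (by ext i; fin_cases i <;> simp [hc.1, hc.2])

lemma det2_rot_ne_zero {p : E2} (h : p ≠ 0) : det2 p (rot p) ≠ 0 := by
  have := coords_ne_zero h
  unfold det2; rw [rot_apply0, rot_apply1]
  rcases this with h' | h' <;> nlinarith [sq_nonneg (p 0), sq_nonneg (p 1), mul_self_pos.mpr h']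

/-- `d` attains its maximum over `X` at `v`. -/
def MaxAt (X : Set E2) (v d : E2) : Prop := ∀ x ∈ X, ⟪x, d⟫ ≤ ⟪v, d⟫

lemma inner_left_linear (d : E2) : IsLinearMap ℝ (fun x : E2 => ⟪x, d⟫) :=
  ⟨fun x y => inner_add_left x y d, fun c x => real_inner_smul_left x d c⟩

lemma hull_bound {F : Finset E2} {d : E2} {c : ℝ} (h : ∀ x ∈ F, ⟪x, d⟫ ≤ c) :
    ∀ x ∈ convexHull ℝ (F : Set E2), ⟪x, d⟫ ≤ c := by
  intro x hx
  have : convexHull ℝ (F : Set E2) ⊆ {w : E2 | ⟪w, d⟫ ≤ c} :=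
    convexHull_min (fun y hy => h y hy) (convex_halfSpace_le (inner_left_linear d) c)
  exact this hx

/-- The support function of the hull of a finite set is attained at a point of the set. -/
lemma supp_attained (F : Finset E2) (hF : F.Nonempty) (d : E2) :
    ∃ v ∈ F, supp (convexHull ℝ (F : Set E2)) d = ⟪v, d⟫ ∧
      ∀ x ∈ convexHull ℝ (F : Set E2), ⟪x, d⟫ ≤ ⟪v, d⟫ := by
  obtain ⟨v, hvF, hv⟩ := F.exists_max_image (fun x => ⟪x, d⟫) hF
  have hb : ∀ x ∈ convexHull ℝ (F : Set E2), ⟪x, d⟫ ≤ ⟪v, d⟫ := hull_bound hv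
  refine ⟨v, hvF, ?_, hb⟩
  apply le_antisymm
  · apply csSup_le
    · exact ⟨⟪v, d⟫, ⟨v, subset_convexHull ℝ _ hvF, rfl⟩⟩
    · rintro y ⟨x, hx, rfl⟩; exact hb x hx
  · exact le_csSup ⟨⟪v, d⟫, by rintro y ⟨x, hx, rfl⟩; exact hb x hx⟩
      ⟨v, subset_convexHull ℝ _ hvF, rfl⟩

lemma supp_eq_of_maxAt {F : Finset E2} {v d : E2} (hv : v ∈ convexHull ℝ (F : Set E2))
    (hmax : MaxAt (convexHull ℝ (F : Set E2)) v d) :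
    supp (convexHull ℝ (F : Set E2)) d = ⟪v, d⟫ := by
  apply le_antisymm
  · apply csSup_le
    · exact ⟨⟪v, d⟫, ⟨v, hv, rfl⟩⟩
    · rintro y ⟨x, hx, rfl⟩; exact hmax x hx
  · exact le_csSup ⟨⟪v, d⟫, by rintro y ⟨x, hx, rfl⟩; exact hmax x hx⟩ ⟨v, hv, rfl⟩

/-- Structure of a polytope: it is the hull of its (finitely many) extreme points. -/
lemma polytope_facts {X : Set E2} (hX : IsPolytope X) :
    ∃ V : Finset E2, (V : Set E2) = Set.extremePoints ℝ X ∧ X = convexHull ℝ (V : Set E2) := by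
  obtain ⟨F, hFne, rfl⟩ := hX
  have hext : Set.extremePoints ℝ (convexHull ℝ (F : Set E2)) ⊆ (F : Set E2) :=
    extremePoints_convexHull_subset
  have hfin : (Set.extremePoints ℝ (convexHull ℝ (F : Set E2))).Finite :=
    F.finite_toSet.subset hext
  refine ⟨hfin.toFinset, hfin.coe_toFinset, ?_⟩
  rw [hfin.coe_toFinset]
  have hclosed : IsClosed (convexHull ℝ (Set.extremePoints ℝ (convexHull ℝ (F : Set E2)))) :=
    hfin.isClosed_convexHull ℝ
  have := closure_convexHull_extremePoints (F.finite_toSet.isCompact_convexHull ℝ)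
    (convex_convexHull ℝ (F : Set E2))
  rw [hclosed.closure_eq] at this
  exact this.symm

/-- Every extreme point of the hull of a finite set is strictly exposed. -/
lemma strict_exposer {V : Finset E2} {v : E2} (hvV : v ∈ V)
    (hv : v ∈ Set.extremePoints ℝ (convexHull ℝ (V : Set E2))) :
    ∃ e : E2, ∀ x ∈ convexHull ℝ (V : Set E2), x ≠ v → ⟪x, e⟫ < ⟪v, e⟫ := by
  rcases eq_or_ne (V.erase v) ∅ with hS | hS
  · -- V = {v}
    have hVv : V = {v} := by
      apply Finset.eq_singleton_iff_unique_mem.2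
      exact ⟨hvV, fun u hu => by
        by_contra hne
        exact (Finset.notMem_empty u) (hS ▸ Finset.mem_erase.2 ⟨hne, hu⟩)⟩
    refine ⟨0, fun x hx hne => absurd ?_ hne⟩
    rw [hVv] at hx
    simpa using hx
  · have hSne : (V.erase v).Nonempty := Finset.nonempty_of_ne_empty hS
    set K := convexHull ℝ ((V.erase v : Finset E2) : Set E2) with hK
    have hvK : v ∉ K := by
      intro hvmem
      have hsub : (V : Set E2) ⊆ K := by
        intro u hu
        rcases eq_or_ne u v with rfl | hne
        · exact hvmem
        · exact subset_convexHull ℝ _ (by exact_mod_cast Finset.mem_erase.2 ⟨hne, hu⟩)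
      have h1 : convexHull ℝ (V : Set E2) ⊆ K := convexHull_min hsub (convex_convexHull ℝ _)
      have h2 : K ⊆ convexHull ℝ (V : Set E2) :=
        convexHull_mono (by exact_mod_cast Finset.coe_subset.2 (Finset.erase_subset v V))
      have heq : convexHull ℝ (V : Set E2) = K := le_antisymm h1 h2
      rw [heq] at hv
      have : v ∈ ((V.erase v : Finset E2) : Set E2) := extremePoints_convexHull_subset hv
      simp at this
    obtain ⟨f, u, hfu, hub⟩ := geometric_hahn_banach_point_closed
      (convex_convexHull ℝ _) ((V.erase v).finite_toSet.isClosed_convexHull ℝ) hvK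
    set z := (InnerProductSpace.toDual ℝ E2).symm f with hz
    have hzf : ∀ x : E2, ⟪x, z⟫ = f x := by
      intro x
      rw [real_inner_comm]
      exact InnerProductSpace.toDual_symm_apply
    refine ⟨-z, fun x hx hne => ?_⟩
    have hVins : (V : Set E2) = insert v ((V.erase v : Finset E2) : Set E2) := by
      rw [← Finset.coe_insert, Finset.insert_erase hvV]
    rw [hVins, convexHull_insert (by exact_mod_cast hSne)] at hx
    rw [mem_convexJoin] at hx
    obtain ⟨a, ha, b, hb, hseg⟩ := hx
    rw [Set.mem_singleton_iff] at ha
    rw [ha] at hseg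
    obtain ⟨s, t, hs, ht, hst, hx⟩ := hseg
    have hbv : ⟪b, -z⟫ < ⟪v, -z⟫ := by
      have := hub b hb
      rw [inner_neg_right, inner_neg_right, hzf, hzf]
      linarith [hfu]
    have ht0 : t ≠ 0 := by
      intro h0
      apply hne
      rw [← hx, h0, zero_smul, add_zero]
      have : s = 1 := by linarith
      rw [this, one_smul]
    have htpos : 0 < t := lt_of_le_of_ne ht (Ne.symm ht0)
    calc ⟪x, -z⟫ = s * ⟪v, -z⟫ + t * ⟪b, -z⟫ := by
          rw [← hx, inner_add_left, real_inner_smul_left, real_inner_smul_left]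
      _ < s * ⟪v, -z⟫ + t * ⟪v, -z⟫ := by nlinarith
      _ = ⟪v, -z⟫ := by rw [← add_mul, hst, one_mul]

lemma add_smul_apply (x y : E2) (c : ℝ) (i : Fin 2) : (x + c • y) i = x i + c * y i := rfl

lemma add_smul_apply' (c d : ℝ) (x y : E2) (i : Fin 2) : (c • x + d • y) i = c * x i + d * y i := rfl

/-- Perturbation of a strictly exposing direction stays maximizing and becomes independent. -/
lemma perturb {V : Finset E2} {v e : E2} (hvV : v ∈ V)
    (hexp : ∀ x ∈ convexHull ℝ (V : Set E2), x ≠ v → ⟪x, e⟫ < ⟪v, e⟫) (he : e ≠ 0) :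
    ∃ g : E2, MaxAt (convexHull ℝ (V : Set E2)) v g ∧ det2 e g ≠ 0 := by
  rcases eq_or_ne (V.erase v) ∅ with hS | hS
  · refine ⟨rot e, ?_, det2_rot_ne_zero he⟩
    have hVv : V = {v} := by
      apply Finset.eq_singleton_iff_unique_mem.2
      exact ⟨hvV, fun u hu => by
        by_contra hne
        exact (Finset.notMem_empty u) (hS ▸ Finset.mem_erase.2 ⟨hne, hu⟩)⟩
    intro x hx
    rw [hVv] at hx
    simp only [Finset.coe_singleton, convexHull_singleton, Set.mem_singleton_iff] at hx
    rw [hx]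
  · have hSne : (V.erase v).Nonempty := Finset.nonempty_of_ne_empty hS
    obtain ⟨xB, hxB, hB⟩ := (V.erase v).exists_max_image (fun x => |⟪x - v, rot e⟫|) hSne
    set B := |⟪xB - v, rot e⟫| with hBdef
    have hB0 : 0 ≤ B := abs_nonneg _
    obtain ⟨xd, hxd, hd⟩ := (V.erase v).exists_min_image (fun x => ⟪v, e⟫ - ⟪x, e⟫) hSne
    set δ := ⟪v, e⟫ - ⟪xd, e⟫ with hδdef
    have hδpos : 0 < δ := by
      have hxdV : xd ∈ V := Finset.mem_of_mem_erase hxd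
      have hxdne : xd ≠ v := (Finset.mem_erase.1 hxd).1
      have := hexp xd (subset_convexHull ℝ _ hxdV) hxdne
      linarith
    set ε := δ / (B + 1) with hεdef
    have hεpos : 0 < ε := div_pos hδpos (by linarith)
    refine ⟨e + ε • rot e, ?_, ?_⟩
    · apply hull_bound
      intro x hxV
      rcases eq_or_ne x v with rfl | hne
      · exact le_refl _
      · have hxe : x ∈ V.erase v := Finset.mem_erase.2 ⟨hne, hxV⟩
        have h1 : |⟪x - v, rot e⟫| ≤ B := hB x hxe
        have h2 : δ ≤ ⟪v, e⟫ - ⟪x, e⟫ := hd x hxe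
        have hkey : ε * (⟪x, rot e⟫ - ⟪v, rot e⟫) < δ := by
          have : ⟪x, rot e⟫ - ⟪v, rot e⟫ ≤ B := by
            rw [← inner_sub_left] at *
            calc ⟪x - v, rot e⟫ ≤ |⟪x - v, rot e⟫| := le_abs_self _
              _ ≤ B := h1
          calc ε * (⟪x, rot e⟫ - ⟪v, rot e⟫) ≤ ε * B := by nlinarith
            _ < δ := by
              rw [hεdef]
              rw [div_mul_eq_mul_div, div_lt_iff₀ (by linarith : (0:ℝ) < B + 1)]
              nlinarith
        rw [inner_add_right, inner_add_right, real_inner_smul_right, real_inner_smul_right]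
        linarith
    · have hexpand : det2 e (e + ε • rot e) = ε * det2 e (rot e) := by
        unfold det2
        rw [add_smul_apply, add_smul_apply, rot_apply0, rot_apply1]
        ring
      rw [hexpand]
      exact mul_ne_zero (ne_of_gt hεpos) (det2_rot_ne_zero he)

/-- A triple of directions certifying vertex `v`. -/
def GoodTriple (X : Set E2) (v a b c : E2) : Prop :=
  MaxAt X v a ∧ MaxAt X v b ∧ det2 a b ≠ 0 ∧ ∃ α β : ℝ, 0 < α ∧ 0 < β ∧ c = α • a + β • b

lemma inner_triple {a b c x : E2} {α β : ℝ} (hc : c = α • a + β • b) :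
    ⟪x, c⟫ = α * ⟪x, a⟫ + β * ⟪x, b⟫ := by
  rw [hc, inner_add_right, real_inner_smul_right, real_inner_smul_right]

lemma determines_of_triples (V : Finset E2) (X : Set E2)
    (hXV : X = convexHull ℝ (V : Set E2)) (hVext : (V : Set E2) = Set.extremePoints ℝ X)
    (n_v : ℕ) (hn : V.card = n_v) (D : Finset E2)
    (htrip : ∀ v ∈ V, ∃ a b c : E2, a ∈ D ∧ b ∈ D ∧ c ∈ D ∧ GoodTriple X v a b c) :
    Determines {Y | IsPolytope Y ∧ (Set.extremePoints ℝ Y).ncard = n_v} D X := by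
  intro Y hY hsupp
  obtain ⟨hYpoly, hYcard⟩ := hY
  obtain ⟨W, hWext, hYW⟩ := polytope_facts hYpoly
  have hYne : Y.Nonempty := by
    obtain ⟨F, hFne, rfl⟩ := hYpoly
    exact Set.Nonempty.mono (subset_convexHull ℝ _) (by exact_mod_cast hFne)
  have hWne : W.Nonempty := by
    rcases Finset.eq_empty_or_nonempty W with rfl | h
    · rw [hYW] at hYne; simp at hYne
    · exact h
  have hvertices : ∀ v ∈ V, v ∈ Set.extremePoints ℝ Y := by
    intro v hvV
    obtain ⟨a, b, c, haD, hbD, hcD, hmaxa, hmaxb, hdet, α, β, hα, hβ, hc⟩ := htrip v hvV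
    have hvX : v ∈ X := hXV ▸ subset_convexHull ℝ _ hvV
    have hmaxc : MaxAt X v c := by
      intro x hx
      rw [inner_triple hc, inner_triple hc]
      have h1 := hmaxa x hx
      have h2 := hmaxb x hx
      nlinarith
    have hsuppXa : supp X a = ⟪v, a⟫ := by
      rw [hXV]; exact supp_eq_of_maxAt (hXV ▸ hvX) (hXV ▸ hmaxa)
    have hsuppXb : supp X b = ⟪v, b⟫ := by
      rw [hXV]; exact supp_eq_of_maxAt (hXV ▸ hvX) (hXV ▸ hmaxb)
    have hsuppXc : supp X c = ⟪v, c⟫ := by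
      rw [hXV]; exact supp_eq_of_maxAt (hXV ▸ hvX) (hXV ▸ hmaxc)
    have hYa : supp Y a = ⟪v, a⟫ := by rw [hsupp a haD, hsuppXa]
    have hYb : supp Y b = ⟪v, b⟫ := by rw [hsupp b hbD, hsuppXb]
    have hYc : supp Y c = ⟪v, c⟫ := by rw [hsupp c hcD, hsuppXc]
    obtain ⟨wa, hwa, hwaval, hwabound⟩ := supp_attained W hWne a
    obtain ⟨wb, hwb, hwbval, hwbbound⟩ := supp_attained W hWne b
    obtain ⟨wc, hwc, hwcval, hwcbound⟩ := supp_attained W hWne c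
    rw [← hYW] at hwabound hwbbound hwcbound
    have hYabound : ∀ y ∈ Y, ⟪y, a⟫ ≤ ⟪v, a⟫ := by
      intro y hy
      calc ⟪y, a⟫ ≤ ⟪wa, a⟫ := hwabound y hy
        _ = supp Y a := by rw [hYW]; exact hwaval.symm
        _ = ⟪v, a⟫ := hYa
    have hYbbound : ∀ y ∈ Y, ⟪y, b⟫ ≤ ⟪v, b⟫ := by
      intro y hy
      calc ⟪y, b⟫ ≤ ⟪wb, b⟫ := hwbbound y hy
        _ = supp Y b := by rw [hYW]; exact hwbval.symm
        _ = ⟪v, b⟫ := hYb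
    have hYcbound : ∀ y ∈ Y, ⟪y, c⟫ ≤ ⟪v, c⟫ := by
      intro y hy
      calc ⟪y, c⟫ ≤ ⟪wc, c⟫ := hwcbound y hy
        _ = supp Y c := by rw [hYW]; exact hwcval.symm
        _ = ⟪v, c⟫ := hYc
    have hkey : ∀ y ∈ Y, ⟪y, c⟫ = ⟪v, c⟫ → y = v := by
      intro y hy hyc
      have h1 : ⟪y, a⟫ ≤ ⟪v, a⟫ := hYabound y hy
      have h2 : ⟪y, b⟫ ≤ ⟪v, b⟫ := hYbbound y hy
      have hsum : α * (⟪v, a⟫ - ⟪y, a⟫) + β * (⟪v, b⟫ - ⟪y, b⟫) = 0 := by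
        have e1 : ⟪v, c⟫ = α * ⟪v, a⟫ + β * ⟪v, b⟫ := inner_triple hc
        have e2 : ⟪y, c⟫ = α * ⟪y, a⟫ + β * ⟪y, b⟫ := inner_triple hc
        rw [e1, e2] at hyc
        linarith
      have ha0 : ⟪v, a⟫ - ⟪y, a⟫ = 0 := by nlinarith
      have hb0 : ⟪v, b⟫ - ⟪y, b⟫ = 0 := by nlinarith
      have hz : v - y = 0 := by
        apply eq_of_perp hdet
        · rw [inner_sub_left]; linarith
        · rw [inner_sub_left]; linarith
      have := sub_eq_zero.1 hz
      exact this.symm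
    have hwcY : wc ∈ Y := hYW ▸ subset_convexHull ℝ _ (by exact_mod_cast hwc)
    have hwcv : wc = v := by
      apply hkey wc hwcY
      have hv1 : ⟪wc, c⟫ = supp Y c := by rw [hYW]; exact hwcval.symm
      rw [hv1, hYc]
    have hvY : v ∈ Y := hwcv ▸ hwcY
    rw [mem_extremePoints]
    refine ⟨hvY, fun x₁ hx₁ x₂ hx₂ hseg => ?_⟩
    obtain ⟨s, t, hs, ht, hst, heq⟩ := hseg
    have hc1 : ⟪x₁, c⟫ ≤ ⟪v, c⟫ := hYcbound x₁ hx₁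
    have hc2 : ⟪x₂, c⟫ ≤ ⟪v, c⟫ := hYcbound x₂ hx₂
    have hcomb : s * ⟪x₁, c⟫ + t * ⟪x₂, c⟫ = ⟪v, c⟫ := by
      rw [← heq, inner_add_left, real_inner_smul_left, real_inner_smul_left]
    have he1 : ⟪x₁, c⟫ = ⟪v, c⟫ := by
      by_contra h
      have h1 : ⟪x₁, c⟫ < ⟪v, c⟫ := lt_of_le_of_ne hc1 h
      have hvv : s * ⟪v, c⟫ + t * ⟪v, c⟫ = ⟪v, c⟫ := by linear_combination ⟪v, c⟫ * hst
      linarith [mul_lt_mul_of_pos_left h1 hs, mul_le_mul_of_nonneg_left hc2 (le_of_lt ht)]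
    have he2 : ⟪x₂, c⟫ = ⟪v, c⟫ := by
      have h2x : t * ⟪x₂, c⟫ = t * ⟪v, c⟫ := by
        linear_combination hcomb - s * he1 - ⟪v, c⟫ * hst
      exact mul_left_cancel₀ (ne_of_gt ht) h2x
    exact ⟨hkey x₁ hx₁ he1, hkey x₂ hx₂ he2⟩
  -- conclude
  have hsub : (V : Set E2) ⊆ Set.extremePoints ℝ Y := fun v hv => hvertices v hv
  have hfinY : (Set.extremePoints ℝ Y).Finite := by rw [← hWext]; exact W.finite_toSet
  have heqext : (V : Set E2) = Set.extremePoints ℝ Y := by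
    apply Set.eq_of_subset_of_ncard_le hsub _ hfinY
    rw [hYcard, Set.ncard_coe_finset, hn]
  have hWV : (W : Set E2) = (V : Set E2) := by rw [hWext, ← heqext]
  rw [hYW, hXV, hWV]

lemma det2_antisymm (p q : E2) : det2 p q = -det2 q p := by unfold det2; ring

lemma det2_zero_right (p : E2) : det2 p 0 = 0 := by
  unfold det2
  have h0 : (0 : E2) 0 = 0 := rfl
  have h1 : (0 : E2) 1 = 0 := rfl
  rw [h0, h1]; ring

lemma det2_zero_left (q : E2) : det2 0 q = 0 := by
  rw [det2_antisymm, det2_zero_right]; ring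

lemma det2_neg_right (p q : E2) : det2 p (-q) = -det2 p q := by
  unfold det2
  have h0 : (-q : E2) 0 = -(q 0) := rfl
  have h1 : (-q : E2) 1 = -(q 1) := rfl
  rw [h0, h1]; ring

lemma smul_apply' (c : ℝ) (p : E2) (i : Fin 2) : (c • p) i = c * p i := rfl

lemma det2_smul_left (c : ℝ) (p q : E2) : det2 (c • p) q = c * det2 p q := by
  unfold det2; rw [smul_apply', smul_apply']; ring

lemma det2_smul_right (c : ℝ) (p q : E2) : det2 p (c • q) = c * det2 p q := by
  unfold det2; rw [smul_apply', smul_apply']; ring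

lemma det2_trans {p q d : E2} (hq : q ≠ 0) (h1 : det2 p q = 0) (h2 : det2 q d = 0) :
    det2 p d = 0 := by
  have key0 : q 0 * det2 p d = d 0 * det2 p q + p 0 * det2 q d := by unfold det2; ring
  have key1 : q 1 * det2 p d = d 1 * det2 p q + p 1 * det2 q d := by unfold det2; ring
  rw [h1, h2] at key0 key1
  rcases coords_ne_zero hq with h | h
  · have h3 : q 0 * det2 p d = 0 := by linarith
    rcases mul_eq_zero.1 h3 with h' | h'
    · exact absurd h' h
    · exact h'
  · have h3 : q 1 * det2 p d = 0 := by linarith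
    rcases mul_eq_zero.1 h3 with h' | h'
    · exact absurd h' h
    · exact h' 

lemma parallel_of_det2 {p q : E2} (hp : p ≠ 0) (h : det2 p q = 0) :
    q = (⟪q, p⟫ / ⟪p, p⟫) • p := by
  have hden : p 0 * p 0 + p 1 * p 1 ≠ 0 := by
    rcases coords_ne_zero hp with h' | h' <;>
      nlinarith [sq_nonneg (p 0), sq_nonneg (p 1), mul_self_pos.mpr h']
  unfold det2 at h
  rw [inner_coords, inner_coords]
  ext i
  fin_cases i
  · show q 0 = (q 0 * p 0 + q 1 * p 1) / (p 0 * p 0 + p 1 * p 1) * p 0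
    rw [div_mul_eq_mul_div, eq_div_iff hden]
    linear_combination (-(p 1)) * h
  · show q 1 = (q 0 * p 0 + q 1 * p 1) / (p 0 * p 0 + p 1 * p 1) * p 1
    rw [div_mul_eq_mul_div, eq_div_iff hden]
    linear_combination (p 0) * h

lemma det2_sum_right (p : E2) (s : Finset E2) (c : E2 → ℝ) :
    det2 p (∑ d ∈ s, c d • d) = ∑ d ∈ s, c d * det2 p d := by
  have h : ∀ x : E2, det2 p x = ⟪x, rot p⟫ := by
    intro x
    rw [inner_coords, rot_apply0, rot_apply1]; unfold det2; ring
  rw [h]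
  rw [sum_inner]
  apply Finset.sum_congr rfl
  intro d _
  rw [real_inner_smul_left, h]

section Span

variable {D₀ : Finset E2}
  (hspan : ∀ x : E2, ∃ c : E2 → ℝ, (∀ d, 0 ≤ c d) ∧ x = ∑ d ∈ D₀, c d • d)

include hspan

lemma span_all_det_zero_false {p : E2} (hp : p ≠ 0) (h : ∀ d ∈ D₀, det2 p d = 0) : False := by
  obtain ⟨c, hc, hsum⟩ := hspan (rot p)
  have h1 : det2 p (rot p) = 0 := by
    rw [hsum, det2_sum_right]
    apply Finset.sum_eq_zero
    intro d hd
    rw [h d hd, mul_zero]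
  exact det2_rot_ne_zero hp h1

lemma exists_indep_pair : ∃ p ∈ D₀, ∃ q ∈ D₀, det2 p q ≠ 0 := by
  by_contra hcon
  push_neg at hcon
  by_cases hz : ∀ d ∈ D₀, d = 0
  · obtain ⟨c, hc, hsum⟩ := hspan (WithLp.toLp 2 ![1, 0] : E2)
    have h0 : (WithLp.toLp 2 ![1, 0] : E2) = 0 := by
      rw [hsum]
      apply Finset.sum_eq_zero
      intro d hd
      rw [hz d hd, smul_zero]
    have h1 : (1 : ℝ) = 0 := by
      calc (1 : ℝ) = (WithLp.toLp 2 ![1, 0] : E2) 0 := rfl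
        _ = (0 : E2) 0 := by rw [h0]
        _ = 0 := rfl
    norm_num at h1
  · push_neg at hz
    obtain ⟨p, hpD, hp⟩ := hz
    exact span_all_det_zero_false hspan hp (fun d hd => hcon p hpD d hd)

lemma eq_of_span_nonpos {v w : E2} (h : ∀ d ∈ D₀, ⟪d, w - v⟫ ≤ 0) : w = v := by
  obtain ⟨c, hc, hsum⟩ := hspan (w - v)
  have hself : ⟪w - v, w - v⟫ ≤ 0 := by
    nth_rewrite 1 [hsum]
    rw [sum_inner]
    apply Finset.sum_nonpos
    intro d hd
    rw [real_inner_smul_left]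
    exact mul_nonpos_of_nonneg_of_nonpos (hc d) (h d hd)
  have : w - v = 0 := by
    have := le_antisymm hself (real_inner_self_nonneg)
    exact inner_self_eq_zero.1 this
  rw [sub_eq_zero] at this
  exact this

lemma card_D₀_ge_three : 3 ≤ D₀.card := by
  obtain ⟨p, hpD, q, hqD, hpq⟩ := exists_indep_pair hspan
  have hne : p ≠ q := by
    intro h
    rw [h] at hpq
    exact hpq (by unfold det2; ring)
  by_contra hcard
  push_neg at hcard
  have hsub : {p, q} ⊆ D₀ := by
    intro x hx
    rcases Finset.mem_insert.1 hx with rfl | hx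
    · exact hpD
    · rw [Finset.mem_singleton.1 hx]; exact hqD
  have hcard2 : ({p, q} : Finset E2).card = 2 := Finset.card_pair hne
  have hD₀eq : D₀ = {p, q} := by
    apply (Finset.eq_of_subset_of_card_le hsub _).symm
    omega
  obtain ⟨c, hc, hsum⟩ := hspan (-p)
  rw [hD₀eq, Finset.sum_pair hne] at hsum
  have hqp : det2 q p ≠ 0 := by
    rw [det2_antisymm] at hpq
    intro h
    rw [h] at hpq
    simp at hpq
  have happ : det2 q (-p) = c p * det2 q p + c q * det2 q q := by
    rw [hsum]
    unfold det2
    rw [add_smul_apply', add_smul_apply']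
    ring
  have hqq : det2 q q = 0 := by unfold det2; ring
  have hneg : det2 q (-p) = -det2 q p := by
    unfold det2
    have h0 : (-p : E2) 0 = -(p 0) := rfl
    have h1 : (-p : E2) 1 = -(p 1) := rfl
    rw [h0, h1]; ring
  rw [hqq, mul_zero, add_zero, hneg] at happ
  have hcp : c p = -1 := by
    have : (c p + 1) * det2 q p = 0 := by linarith [happ]
    rcases mul_eq_zero.1 this with h | h
    · linarith
    · exact absurd h hqp
  linarith [hc p]

end Span

lemma maxAt_of_exposer {V : Finset E2} {v e : E2}
    (hexp : ∀ x ∈ convexHull ℝ (V : Set E2), x ≠ v → ⟪x, e⟫ < ⟪v, e⟫) :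
    MaxAt (convexHull ℝ (V : Set E2)) v e := by
  intro x hx
  rcases eq_or_ne x v with rfl | h
  · exact le_refl _
  · exact le_of_lt (hexp x hx h)

lemma exposer_ne_zero {V : Finset E2} {v e w : E2} (hw : w ∈ convexHull ℝ (V : Set E2))
    (hwv : w ≠ v)
    (hexp : ∀ x ∈ convexHull ℝ (V : Set E2), x ≠ v → ⟪x, e⟫ < ⟪v, e⟫) : e ≠ 0 := by
  intro h
  have := hexp w hw hwv
  rw [h, inner_zero_right, inner_zero_right] at this
  exact lt_irrefl _ this

lemma triple_generic {V : Finset E2} {v : E2} (hvV : v ∈ V)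
    (hv : v ∈ Set.extremePoints ℝ (convexHull ℝ (V : Set E2))) (h2 : 2 ≤ V.card) :
    ∃ a b : E2, MaxAt (convexHull ℝ (V : Set E2)) v a ∧
      MaxAt (convexHull ℝ (V : Set E2)) v b ∧ det2 a b ≠ 0 := by
  obtain ⟨e, hexp⟩ := strict_exposer hvV hv
  obtain ⟨w, hwV, hwv⟩ := Finset.exists_mem_ne (show 1 < V.card by omega) v
  have he : e ≠ 0 := exposer_ne_zero (subset_convexHull ℝ _ hwV) hwv hexp
  obtain ⟨g, hg, hdet⟩ := perturb hvV hexp he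
  exact ⟨e, g, maxAt_of_exposer hexp, hg, hdet⟩

lemma triple_save {V : Finset E2} {v d : E2} (hvV : v ∈ V)
    (hv : v ∈ Set.extremePoints ℝ (convexHull ℝ (V : Set E2))) (h2 : 2 ≤ V.card)
    (hd0 : d ≠ 0) (hmaxd : MaxAt (convexHull ℝ (V : Set E2)) v d) :
    ∃ b : E2, MaxAt (convexHull ℝ (V : Set E2)) v b ∧ det2 d b ≠ 0 := by
  obtain ⟨e, hexp⟩ := strict_exposer hvV hv
  obtain ⟨w, hwV, hwv⟩ := Finset.exists_mem_ne (show 1 < V.card by omega) v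
  have hwX : w ∈ convexHull ℝ (V : Set E2) := subset_convexHull ℝ _ hwV
  have he : e ≠ 0 := exposer_ne_zero hwX hwv hexp
  by_cases hde : det2 d e = 0
  · have hpar : e = (⟪e, d⟫ / ⟪d, d⟫) • d := parallel_of_det2 hd0 hde
    set l := ⟪e, d⟫ / ⟪d, d⟫ with hl_def
    have hl : 0 < l := by
      rcases lt_trichotomy l 0 with hneg | hzero | hpos
      · exfalso
        have h1 := hexp w hwX hwv
        rw [hpar, real_inner_smul_right, real_inner_smul_right] at h1
        have h2' := hmaxd w hwX
        nlinarith
      · exfalso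
        apply he
        rw [hpar, hzero, zero_smul]
      · exact hpos
    have hdexp : ∀ x ∈ convexHull ℝ (V : Set E2), x ≠ v → ⟪x, d⟫ < ⟪v, d⟫ := by
      intro x hx hxv
      have h1 := hexp x hx hxv
      rw [hpar, real_inner_smul_right, real_inner_smul_right] at h1
      exact lt_of_mul_lt_mul_left h1 hl.le
    obtain ⟨g, hg, hdet⟩ := perturb hvV hdexp hd0
    exact ⟨g, hg, hdet⟩
  · exact ⟨e, maxAt_of_exposer hexp, hde⟩

/-- Classification of how the positively spanning set `D₀` can touch the polygon. -/
lemma classification {D₀ : Finset E2}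
    (hspan : ∀ x : E2, ∃ c : E2 → ℝ, (∀ d, 0 ≤ c d) ∧ x = ∑ d ∈ D₀, c d • d)
    {V : Finset E2} (hV2 : 2 ≤ V.card) :
    ∃ w₁ ∈ V, ∃ w₂ ∈ V, ∃ w₃ ∈ V, ∃ d₁ ∈ D₀, ∃ d₂ ∈ D₀, ∃ d₃ ∈ D₀,
      d₁ ≠ 0 ∧ d₂ ≠ 0 ∧ d₃ ≠ 0 ∧
      MaxAt (convexHull ℝ (V : Set E2)) w₁ d₁ ∧
      MaxAt (convexHull ℝ (V : Set E2)) w₂ d₂ ∧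
      MaxAt (convexHull ℝ (V : Set E2)) w₃ d₃ ∧
      ((w₁ ≠ w₂ ∧ w₁ ≠ w₃ ∧ w₂ ≠ w₃) ∨ (w₁ = w₂ ∧ w₂ ≠ w₃ ∧ det2 d₁ d₂ ≠ 0)) := by
  set X := convexHull ℝ (V : Set E2) with hXdef
  have hVne : V.Nonempty := Finset.card_pos.1 (by omega)
  have hmax : ∀ d : E2, ∃ v ∈ V, MaxAt X v d := by
    intro d
    obtain ⟨v, hvV, _, hb⟩ := supp_attained V hVne d
    exact ⟨v, hvV, hb⟩
  set V' := V.filter (fun v => ∃ d ∈ D₀, d ≠ 0 ∧ MaxAt X v d) with hV'def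
  have hV'sub : V' ⊆ V := Finset.filter_subset _ _
  have hmem' : ∀ d ∈ D₀, d ≠ 0 → ∃ v ∈ V', MaxAt X v d := by
    intro d hdD hd0
    obtain ⟨v, hvV, hmaxv⟩ := hmax d
    exact ⟨v, Finset.mem_filter.2 ⟨hvV, d, hdD, hd0, hmaxv⟩, hmaxv⟩
  have hunpack : ∀ v ∈ V', ∃ d ∈ D₀, d ≠ 0 ∧ MaxAt X v d := by
    intro v hv
    exact (Finset.mem_filter.1 hv).2
  by_cases h3 : 3 ≤ V'.card
  · obtain ⟨T, hTsub, hTcard⟩ := Finset.exists_subset_card_eq h3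
    obtain ⟨x, y, z, hxy, hxz, hyz, hTeq⟩ := Finset.card_eq_three.1 hTcard
    have hx : x ∈ V' := hTsub (by rw [hTeq]; simp)
    have hy : y ∈ V' := hTsub (by rw [hTeq]; simp)
    have hz : z ∈ V' := hTsub (by rw [hTeq]; simp)
    obtain ⟨dx, hdxD, hdx0, hdxm⟩ := hunpack x hx
    obtain ⟨dy, hdyD, hdy0, hdym⟩ := hunpack y hy
    obtain ⟨dz, hdzD, hdz0, hdzm⟩ := hunpack z hz
    exact ⟨x, hV'sub hx, y, hV'sub hy, z, hV'sub hz, dx, hdxD, dy, hdyD, dz, hdzD,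
      hdx0, hdy0, hdz0, hdxm, hdym, hdzm, Or.inl ⟨hxy, hxz, hyz⟩⟩
  · push_neg at h3
    -- V' is nonempty
    obtain ⟨p0, hp0D, q0, hq0D, hpq0⟩ := exists_indep_pair hspan
    have hp00 : p0 ≠ 0 := by
      intro h
      rw [h, det2_zero_left] at hpq0
      exact hpq0 rfl
    obtain ⟨v0, hv0, _⟩ := hmem' p0 hp0D hp00
    -- V' cannot be a singleton
    have hcard1 : V'.card ≠ 1 := by
      intro h1
      obtain ⟨u, hu⟩ := Finset.card_eq_one.1 h1
      have hall : ∀ d ∈ D₀, d ≠ 0 → MaxAt X u d := by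
        intro d hdD hd0
        obtain ⟨v, hvV', hmaxv⟩ := hmem' d hdD hd0
        rw [hu, Finset.mem_singleton] at hvV'
        rw [← hvV']
        exact hmaxv
      have huV : u ∈ V := hV'sub (by rw [hu]; exact Finset.mem_singleton_self u)
      have hVsub : ∀ w ∈ V, w = u := by
        intro w hwV
        apply eq_of_span_nonpos hspan
        intro d hdD
        rcases eq_or_ne d 0 with rfl | hd0
        · rw [inner_zero_left]
        · have h1 := hall d hdD hd0 w (subset_convexHull ℝ _ hwV)
          rw [inner_sub_right]
          have c1 : ⟪d, w⟫ = ⟪w, d⟫ := real_inner_comm w d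
          have c2 : ⟪d, u⟫ = ⟪u, d⟫ := real_inner_comm u d
          linarith
      obtain ⟨w, hwV, hwu⟩ := Finset.exists_mem_ne (show 1 < V.card by omega) u
      exact hwu (hVsub w hwV)
    have hcard2 : V'.card = 2 := by
      have : 1 ≤ V'.card := Finset.card_pos.2 ⟨v0, hv0⟩
      omega
    obtain ⟨v, w, hvw, hV'eq⟩ := Finset.card_eq_two.1 hcard2
    have hvV' : v ∈ V' := by rw [hV'eq]; simp
    have hwV' : w ∈ V' := by rw [hV'eq]; simp
    by_cases hind : ∃ u ∈ V', ∃ d ∈ D₀, ∃ d' ∈ D₀,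
        d ≠ 0 ∧ d' ≠ 0 ∧ MaxAt X u d ∧ MaxAt X u d' ∧ det2 d d' ≠ 0
    · obtain ⟨u, huV', d, hdD, d', hd'D, hd0, hd'0, hdm, hd'm, hdd'⟩ := hind
      have huvw : u = v ∨ u = w := by
        have := hV'eq ▸ huV'
        rcases Finset.mem_insert.1 this with h | h
        · exact Or.inl h
        · exact Or.inr (Finset.mem_singleton.1 h)
      -- pick the other vertex
      rcases huvw with rfl | rfl
      · obtain ⟨d₃, hd₃D, hd₃0, hd₃m⟩ := hunpack w hwV'
        exact ⟨u, hV'sub huV', u, hV'sub huV', w, hV'sub hwV', d, hdD, d', hd'D, d₃, hd₃D,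
          hd0, hd'0, hd₃0, hdm, hd'm, hd₃m, Or.inr ⟨rfl, hvw, hdd'⟩⟩
      · obtain ⟨d₃, hd₃D, hd₃0, hd₃m⟩ := hunpack v hvV'
        exact ⟨u, hV'sub huV', u, hV'sub huV', v, hV'sub hvV', d, hdD, d', hd'D, d₃, hd₃D,
          hd0, hd'0, hd₃0, hdm, hd'm, hd₃m, Or.inr ⟨rfl, Ne.symm hvw, hdd'⟩⟩
    · push_neg at hind
      exfalso
      obtain ⟨dv, hdvD, hdv0, hdvm⟩ := hunpack v hvV'
      obtain ⟨dw, hdwD, hdw0, hdwm⟩ := hunpack w hwV'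
      have hat : ∀ d ∈ D₀, d ≠ 0 → (MaxAt X v d ∨ MaxAt X w d) := by
        intro d hdD hd0
        obtain ⟨u, huV', hmaxu⟩ := hmem' d hdD hd0
        have := hV'eq ▸ huV'
        rcases Finset.mem_insert.1 this with h | h
        · exact Or.inl (h ▸ hmaxu)
        · exact Or.inr ((Finset.mem_singleton.1 h) ▸ hmaxu)
      by_cases hpq : det2 dv dw = 0
      · -- all of D₀ is parallel to dv : contradiction with positive spanning
        apply span_all_det_zero_false hspan hdv0
        intro d hdD
        rcases eq_or_ne d 0 with rfl | hd0
        · exact det2_zero_right dv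
        · rcases hat d hdD hd0 with hmv | hmw
          · exact hind v hvV' dv hdvD d hdD hdv0 hd0 hdvm hmv
          · have h1 : det2 dw d = 0 := hind w hwV' dw hdwD d hdD hdw0 hd0 hdwm hmw
            exact det2_trans hdw0 hpq h1
      · -- both vertices carry a negative multiple direction: X degenerates to a point
        have hsq : (0:ℝ) < det2 dv dw * det2 dv dw := mul_self_pos.mpr hpq
        have hstep1 : ∃ dn ∈ D₀, dn ≠ 0 ∧ MaxAt X v dn ∧ det2 dn dw * det2 dv dw < 0 := by
          by_contra hcon
          push_neg at hcon
          have hge : ∀ d ∈ D₀, 0 ≤ det2 d dw * det2 dv dw := by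
            intro d hdD
            rcases eq_or_ne d 0 with rfl | hd0
            · rw [det2_zero_left, zero_mul]
            · rcases hat d hdD hd0 with hmv | hmw
              · exact hcon d hdD hd0 hmv
              · have h1 : det2 dw d = 0 := hind w hwV' dw hdwD d hdD hdw0 hd0 hdwm hmw
                have h2 : det2 d dw = 0 := by rw [det2_antisymm, h1]; ring
                rw [h2, zero_mul]
          obtain ⟨c, hc, hsum⟩ := hspan (-dv)
          have hexp : det2 dw (-dv) = ∑ d ∈ D₀, c d * det2 dw d := by
            calc det2 dw (-dv) = det2 dw (∑ d ∈ D₀, c d • d) := by rw [← hsum]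
              _ = _ := det2_sum_right _ _ _
          have hval : det2 dw (-dv) = det2 dv dw := by
            rw [det2_neg_right, det2_antisymm dw dv]; ring
          have hsumle : (∑ d ∈ D₀, c d * det2 dw d) * det2 dv dw ≤ 0 := by
            rw [Finset.sum_mul]
            apply Finset.sum_nonpos
            intro d hd
            have h1 := hge d hd
            have h2 : det2 dw d = -det2 d dw := det2_antisymm _ _
            have h3 := hc d
            rw [h2]
            nlinarith [mul_nonneg h3 h1]
          rw [← hexp, hval] at hsumle
          linarith
        have hstep2 : ∃ qn ∈ D₀, qn ≠ 0 ∧ MaxAt X w qn ∧ det2 dv qn * det2 dv dw < 0 := by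
          by_contra hcon
          push_neg at hcon
          have hge : ∀ d ∈ D₀, 0 ≤ det2 dv d * det2 dv dw := by
            intro d hdD
            rcases eq_or_ne d 0 with rfl | hd0
            · rw [det2_zero_right, zero_mul]
            · rcases hat d hdD hd0 with hmv | hmw
              · rw [hind v hvV' dv hdvD d hdD hdv0 hd0 hdvm hmv, zero_mul]
              · exact hcon d hdD hd0 hmw
          obtain ⟨c, hc, hsum⟩ := hspan (-dw)
          have hexp : det2 dv (-dw) = ∑ d ∈ D₀, c d * det2 dv d := by
            calc det2 dv (-dw) = det2 dv (∑ d ∈ D₀, c d • d) := by rw [← hsum]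
              _ = _ := det2_sum_right _ _ _
          have hval : det2 dv (-dw) = -det2 dv dw := det2_neg_right _ _
          have hsumge : 0 ≤ (∑ d ∈ D₀, c d * det2 dv d) * det2 dv dw := by
            rw [Finset.sum_mul]
            apply Finset.sum_nonneg
            intro d hd
            have h1 := hge d hd
            have h3 := hc d
            nlinarith [mul_nonneg h3 h1]
          rw [← hexp, hval] at hsumge
          linarith
        obtain ⟨dn, hdnD, hdn0, hdnm, hdnneg⟩ := hstep1
        have hdvdn : det2 dv dn = 0 := hind v hvV' dv hdvD dn hdnD hdv0 hdn0 hdvm hdnm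
        have hpar : dn = (⟪dn, dv⟫ / ⟪dv, dv⟫) • dv := parallel_of_det2 hdv0 hdvdn
        set l := ⟪dn, dv⟫ / ⟪dv, dv⟫ with hldef
        have hlneg : l < 0 := by
          have h1 : det2 dn dw = l * det2 dv dw := by
            rw [hpar, det2_smul_left]
          by_contra hcl
          push_neg at hcl
          have h2 : det2 dn dw * det2 dv dw = l * (det2 dv dw * det2 dv dw) := by
            rw [h1]; ring
          nlinarith [mul_nonneg hcl (le_of_lt hsq)]
        have hlineV : ∀ x ∈ X, ⟪x, dv⟫ = ⟪v, dv⟫ := by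
          intro x hx
          have h1 := hdvm x hx
          have h2 := hdnm x hx
          rw [hpar, real_inner_smul_right, real_inner_smul_right] at h2
          refine le_antisymm h1 ?_
          nlinarith
        obtain ⟨qn, hqnD, hqn0, hqnm, hqnneg⟩ := hstep2
        have hdwqn : det2 dw qn = 0 := hind w hwV' dw hdwD qn hqnD hdw0 hqn0 hdwm hqnm
        have hparw : qn = (⟪qn, dw⟫ / ⟪dw, dw⟫) • dw := parallel_of_det2 hdw0 hdwqn
        set mu := ⟪qn, dw⟫ / ⟪dw, dw⟫ with hmudef
        have hmuneg : mu < 0 := by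
          have h1 : det2 dv qn = mu * det2 dv dw := by
            rw [hparw, det2_smul_right]
          by_contra hcm
          push_neg at hcm
          have h2 : det2 dv qn * det2 dv dw = mu * (det2 dv dw * det2 dv dw) := by
            rw [h1]; ring
          nlinarith [mul_nonneg hcm (le_of_lt hsq)]
        have hlineW : ∀ x ∈ X, ⟪x, dw⟫ = ⟪w, dw⟫ := by
          intro x hx
          have h1 := hdwm x hx
          have h2 := hqnm x hx
          rw [hparw, real_inner_smul_right, real_inner_smul_right] at h2
          refine le_antisymm h1 ?_
          nlinarith
        have hvX : v ∈ X := subset_convexHull ℝ _ (hV'sub hvV')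
        have hwX : w ∈ X := subset_convexHull ℝ _ (hV'sub hwV')
        have h1 : ⟪w - v, dv⟫ = 0 := by
          rw [inner_sub_left, hlineV w hwX]; ring
        have h2 : ⟪w - v, dw⟫ = 0 := by
          rw [inner_sub_left, hlineW v hvX]; ring
        have hz0 := eq_of_perp hpq h1 h2
        rw [sub_eq_zero] at hz0
        exact hvw hz0.symm

lemma goodtriple_sum {X : Set E2} {v a b : E2} (ha : MaxAt X v a) (hb : MaxAt X v b)
    (hab : det2 a b ≠ 0) : GoodTriple X v a b (a + b) :=
  ⟨ha, hb, hab, 1, 1, one_pos, one_pos, by rw [one_smul, one_smul]⟩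

lemma card_le_two (x y : E2) : ({x, y} : Finset E2).card ≤ 2 := by
  apply le_trans (Finset.card_insert_le _ _)
  simp

lemma card_le_three (x y z : E2) : ({x, y, z} : Finset E2).card ≤ 3 := by
  apply le_trans (Finset.card_insert_le _ _)
  have := card_le_two y z
  omega

end Stmt6Aux

open Stmt6Aux in
/-- if `D₀` is a set of `m` directions positively spanning `ℝ²`, then a
polytope `X ⊆ ℝ²` with exactly `n_v` vertices is determined by a set of directions
containing `D₀` of cardinality at most `3 n_v + (m - 3)`, within the class of
polytopes with exactly `n_v` vertices. -/
theorem stmt_6 (m : ℕ) (D₀ : Finset (EuclideanSpace ℝ (Fin 2))) (hm : D₀.card = m)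
    (hspan : ∀ x : EuclideanSpace ℝ (Fin 2), ∃ c : EuclideanSpace ℝ (Fin 2) → ℝ,
      (∀ d, 0 ≤ c d) ∧ x = ∑ d ∈ D₀, c d • d)
    (n_v : ℕ) (X : Set (EuclideanSpace ℝ (Fin 2))) (hX : IsPolytope X)
    (hcard : (Set.extremePoints ℝ X).ncard = n_v) :
    ∃ D : Finset (EuclideanSpace ℝ (Fin 2)), D₀ ⊆ D ∧ D.card ≤ 3 * n_v + (m - 3) ∧
      Determines {Y | IsPolytope Y ∧ (Set.extremePoints ℝ Y).ncard = n_v} D X := by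
  classical
  obtain ⟨V, hVext, hXV⟩ := polytope_facts hX
  have hncard : V.card = n_v := by rw [← hcard, ← hVext, Set.ncard_coe_finset]
  have hVne : V.Nonempty := by
    obtain ⟨F, hFne, hXF⟩ := hX
    rcases Finset.eq_empty_or_nonempty V with rfl | h
    · exfalso
      rw [Finset.coe_empty, convexHull_empty] at hXV
      obtain ⟨f, hf⟩ := hFne
      have : f ∈ X := hXF ▸ subset_convexHull ℝ _ hf
      rw [hXV] at this
      exact this
    · exact h
  rcases Nat.lt_or_ge V.card 2 with hlt | hge
  · -- exactly one vertex
    have hV1 : V.card = 1 := by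
      have := Finset.card_pos.2 hVne
      omega
    refine ⟨D₀, Finset.Subset.refl _, by omega, ?_⟩
    obtain ⟨v, hVv⟩ := Finset.card_eq_one.1 hV1
    have hXv : X = {v} := by
      rw [hXV, hVv, Finset.coe_singleton, convexHull_singleton]
    intro Y hY hsupp
    obtain ⟨hYpoly, hYcard⟩ := hY
    obtain ⟨W, hWext, hYW⟩ := polytope_facts hYpoly
    have hWcard : W.card = 1 := by
      rw [← Set.ncard_coe_finset, hWext, hYcard, ← hncard, hV1]
    obtain ⟨y, hWy⟩ := Finset.card_eq_one.1 hWcard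
    have hYy : Y = {y} := by
      rw [hYW, hWy, Finset.coe_singleton, convexHull_singleton]
    have heqd : ∀ d ∈ D₀, ⟪y, d⟫ = ⟪v, d⟫ := by
      intro d hd
      have h1 := hsupp d hd
      rw [hXv, hYy] at h1
      simpa [supp, Set.image_singleton] using h1
    have hyv : y = v := by
      apply eq_of_span_nonpos hspan
      intro d hd
      rw [inner_sub_right]
      have c1 : ⟪d, y⟫ = ⟪y, d⟫ := real_inner_comm y d
      have c2 : ⟪d, v⟫ = ⟪v, d⟫ := real_inner_comm v d
      have := heqd d hd
      linarith
    rw [hYy, hXv, hyv]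
  · -- at least two vertices
    have hm3 : 3 ≤ m := hm ▸ card_D₀_ge_three hspan
    have hvert : ∀ v ∈ V, v ∈ Set.extremePoints ℝ (convexHull ℝ (V : Set E2)) := by
      intro v hv
      rw [← hXV, ← hVext]
      exact_mod_cast hv
    obtain ⟨w₁, hw₁, w₂, hw₂, w₃, hw₃, d₁, hd₁, d₂, hd₂, d₃, hd₃,
      h10, h20, h30, hm1, hm2, hm3', hcases⟩ := classification hspan hge
    have hgen : ∀ v ∈ V, ∃ a b : E2, MaxAt (convexHull ℝ (V : Set E2)) v a ∧
        MaxAt (convexHull ℝ (V : Set E2)) v b ∧ det2 a b ≠ 0 :=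
      fun v hv => triple_generic hv (hvert v hv) hge
    choose! A B hA hB hAB using hgen
    rcases hcases with ⟨h12, h13, h23⟩ | ⟨heq12, h23, hdet12⟩
    · -- three distinct supported vertices, save one direction at each
      obtain ⟨b₁, hb₁, hdb₁⟩ := triple_save hw₁ (hvert _ hw₁) hge h10 hm1
      obtain ⟨b₂, hb₂, hdb₂⟩ := triple_save hw₂ (hvert _ hw₂) hge h20 hm2
      obtain ⟨b₃, hb₃, hdb₃⟩ := triple_save hw₃ (hvert _ hw₃) hge h30 hm3'
      set T : E2 → Finset E2 := fun v =>
        if v = w₁ then {b₁, d₁ + b₁} else if v = w₂ then {b₂, d₂ + b₂}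
        else if v = w₃ then {b₃, d₃ + b₃} else {A v, B v, A v + B v} with hTdef
      set D : Finset E2 := D₀ ∪ V.biUnion T with hDdef
      have hTD : ∀ v ∈ V, T v ⊆ D := by
        intro v hv x hx
        exact Finset.mem_union_right _ (Finset.mem_biUnion.2 ⟨v, hv, hx⟩)
      refine ⟨D, Finset.subset_union_left, ?_, ?_⟩
      · -- cardinality
        have hW3 : ({w₁, w₂, w₃} : Finset E2) ⊆ V := by
          intro x hx
          rcases Finset.mem_insert.1 hx with rfl | hx
          · exact hw₁
          rcases Finset.mem_insert.1 hx with rfl | hx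
          · exact hw₂
          rw [Finset.mem_singleton.1 hx]
          exact hw₃
        have hW3card : ({w₁, w₂, w₃} : Finset E2).card = 3 := by
          rw [Finset.card_insert_of_notMem (by simp [h12, h13]),
            Finset.card_insert_of_notMem (by simp [h23]), Finset.card_singleton]
        have hsum3 : ∑ v ∈ ({w₁, w₂, w₃} : Finset E2), (T v).card ≤ 6 := by
          rw [Finset.sum_insert (by simp [h12, h13]), Finset.sum_insert (by simp [h23]),
            Finset.sum_singleton]
          have e1 : T w₁ = {b₁, d₁ + b₁} := by rw [hTdef]; simp
          have e2 : T w₂ = {b₂, d₂ + b₂} := by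
            rw [hTdef]; simp [Ne.symm h12]
          have e3 : T w₃ = {b₃, d₃ + b₃} := by
            rw [hTdef]; simp [Ne.symm h13, Ne.symm h23]
          rw [e1, e2, e3]
          have c1 := (Finset.card_le_two : ({b₁, d₁ + b₁} : Finset E2).card ≤ 2)
          have c2 := (Finset.card_le_two : ({b₂, d₂ + b₂} : Finset E2).card ≤ 2)
          have c3 := (Finset.card_le_two : ({b₃, d₃ + b₃} : Finset E2).card ≤ 2)
          omega
        have hsumrest : ∑ v ∈ V \ {w₁, w₂, w₃}, (T v).card ≤ 3 * (V.card - 3) := by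
          calc ∑ v ∈ V \ {w₁, w₂, w₃}, (T v).card
              ≤ ∑ v ∈ V \ {w₁, w₂, w₃}, 3 := by
                apply Finset.sum_le_sum
                intro v _
                simp only [hTdef]
                by_cases hv1 : v = w₁
                · rw [if_pos hv1]; exact (Finset.card_le_two).trans (by norm_num)
                rw [if_neg hv1]
                by_cases hv2 : v = w₂
                · rw [if_pos hv2]; exact (Finset.card_le_two).trans (by norm_num)
                rw [if_neg hv2]
                by_cases hv3 : v = w₃
                · rw [if_pos hv3]; exact (Finset.card_le_two).trans (by norm_num)
                · rw [if_neg hv3]; exact Finset.card_le_three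
            _ = 3 * (V.card - 3) := by
                rw [Finset.sum_const, Finset.card_sdiff_of_subset hW3, hW3card, smul_eq_mul]
                ring
        have hVc3 : 3 ≤ V.card := hW3card ▸ Finset.card_le_card hW3
        have hsumtot : ∑ v ∈ V, (T v).card ≤ 3 * V.card - 3 := by
          calc ∑ v ∈ V, (T v).card
              = (∑ v ∈ V \ {w₁, w₂, w₃}, (T v).card)
                + ∑ v ∈ ({w₁, w₂, w₃} : Finset E2), (T v).card :=
                (Finset.sum_sdiff hW3).symm
            _ ≤ 3 * (V.card - 3) + 6 := add_le_add hsumrest hsum3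
            _ ≤ 3 * V.card - 3 := by omega
        have hDcard : D.card ≤ m + (3 * V.card - 3) := by
          calc D.card ≤ D₀.card + (V.biUnion T).card := Finset.card_union_le _ _
            _ ≤ m + ∑ v ∈ V, (T v).card := by
                have := Finset.card_biUnion_le (s := V) (t := T)
                omega
            _ ≤ m + (3 * V.card - 3) := by omega
        rw [← hncard]
        omega
      · apply determines_of_triples V X hXV hVext n_v hncard D
        intro v hv
        by_cases hv1 : v = w₁
        · subst hv1
          refine ⟨d₁, b₁, d₁ + b₁, Finset.mem_union_left _ hd₁,
            hTD v hv (by rw [hTdef]; simp), hTD v hv (by rw [hTdef]; simp), ?_⟩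
          rw [hXV]
          exact goodtriple_sum hm1 hb₁ hdb₁
        by_cases hv2 : v = w₂
        · subst hv2
          refine ⟨d₂, b₂, d₂ + b₂, Finset.mem_union_left _ hd₂,
            hTD v hv (by rw [hTdef]; simp [hv1]), hTD v hv (by rw [hTdef]; simp [hv1]), ?_⟩
          rw [hXV]
          exact goodtriple_sum hm2 hb₂ hdb₂
        by_cases hv3 : v = w₃
        · subst hv3
          refine ⟨d₃, b₃, d₃ + b₃, Finset.mem_union_left _ hd₃,
            hTD v hv (by rw [hTdef]; simp [hv1, hv2]),
            hTD v hv (by rw [hTdef]; simp [hv1, hv2]), ?_⟩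
          rw [hXV]
          exact goodtriple_sum hm3' hb₃ hdb₃
        · refine ⟨A v, B v, A v + B v,
            hTD v hv (by rw [hTdef]; simp [hv1, hv2, hv3]),
            hTD v hv (by rw [hTdef]; simp [hv1, hv2, hv3]),
            hTD v hv (by rw [hTdef]; simp [hv1, hv2, hv3]), ?_⟩
          rw [hXV]
          exact goodtriple_sum (hA v hv) (hB v hv) (hAB v hv)
    · -- two supported vertices, an independent pair at the first
      subst heq12
      have h13' : w₁ ≠ w₃ := h23
      obtain ⟨b₃, hb₃, hdb₃⟩ := triple_save hw₃ (hvert _ hw₃) hge h30 hm3'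
      set T : E2 → Finset E2 := fun v =>
        if v = w₁ then {d₁ + d₂} else if v = w₃ then {b₃, d₃ + b₃}
        else {A v, B v, A v + B v} with hTdef
      set D : Finset E2 := D₀ ∪ V.biUnion T with hDdef
      have hTD : ∀ v ∈ V, T v ⊆ D := by
        intro v hv x hx
        exact Finset.mem_union_right _ (Finset.mem_biUnion.2 ⟨v, hv, hx⟩)
      refine ⟨D, Finset.subset_union_left, ?_, ?_⟩
      · have hW2 : ({w₁, w₃} : Finset E2) ⊆ V := by
          intro x hx
          rcases Finset.mem_insert.1 hx with rfl | hx
          · exact hw₁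
          rw [Finset.mem_singleton.1 hx]
          exact hw₃
        have hW2card : ({w₁, w₃} : Finset E2).card = 2 := Finset.card_pair h13'
        have hsum2 : ∑ v ∈ ({w₁, w₃} : Finset E2), (T v).card ≤ 3 := by
          rw [Finset.sum_pair h13']
          have e1 : T w₁ = {d₁ + d₂} := by rw [hTdef]; simp
          have e3 : T w₃ = {b₃, d₃ + b₃} := by rw [hTdef]; simp [Ne.symm h13']
          rw [e1, e3]
          have c3 := (Finset.card_le_two : ({b₃, d₃ + b₃} : Finset E2).card ≤ 2)
          have c1 : ({d₁ + d₂} : Finset E2).card = 1 := Finset.card_singleton _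
          omega
        have hsumrest : ∑ v ∈ V \ {w₁, w₃}, (T v).card ≤ 3 * (V.card - 2) := by
          calc ∑ v ∈ V \ {w₁, w₃}, (T v).card
              ≤ ∑ v ∈ V \ {w₁, w₃}, 3 := by
                apply Finset.sum_le_sum
                intro v _
                simp only [hTdef]
                by_cases hv1 : v = w₁
                · rw [if_pos hv1]; exact (Finset.card_singleton _).le.trans (by norm_num)
                rw [if_neg hv1]
                by_cases hv3 : v = w₃
                · rw [if_pos hv3]; exact (Finset.card_le_two).trans (by norm_num)
                · rw [if_neg hv3]; exact Finset.card_le_three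
            _ = 3 * (V.card - 2) := by
                rw [Finset.sum_const, Finset.card_sdiff_of_subset hW2, hW2card, smul_eq_mul]
                ring
        have hVc2 : 2 ≤ V.card := hW2card ▸ Finset.card_le_card hW2
        have hsumtot : ∑ v ∈ V, (T v).card ≤ 3 * V.card - 3 := by
          calc ∑ v ∈ V, (T v).card
              = (∑ v ∈ V \ {w₁, w₃}, (T v).card)
                + ∑ v ∈ ({w₁, w₃} : Finset E2), (T v).card :=
                (Finset.sum_sdiff hW2).symm
            _ ≤ 3 * (V.card - 2) + 3 := add_le_add hsumrest hsum2
            _ ≤ 3 * V.card - 3 := by omega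
        have hDcard : D.card ≤ m + (3 * V.card - 3) := by
          calc D.card ≤ D₀.card + (V.biUnion T).card := Finset.card_union_le _ _
            _ ≤ m + ∑ v ∈ V, (T v).card := by
                have := Finset.card_biUnion_le (s := V) (t := T)
                omega
            _ ≤ m + (3 * V.card - 3) := by omega
        rw [← hncard]
        omega
      · apply determines_of_triples V X hXV hVext n_v hncard D
        intro v hv
        by_cases hv1 : v = w₁
        · subst hv1
          refine ⟨d₁, d₂, d₁ + d₂, Finset.mem_union_left _ hd₁,
            Finset.mem_union_left _ hd₂, hTD v hv (by rw [hTdef]; simp), ?_⟩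
          rw [hXV]
          exact goodtriple_sum hm1 hm2 hdet12
        by_cases hv3 : v = w₃
        · subst hv3
          refine ⟨d₃, b₃, d₃ + b₃, Finset.mem_union_left _ hd₃,
            hTD v hv (by rw [hTdef]; simp [hv1]), hTD v hv (by rw [hTdef]; simp [hv1]), ?_⟩
          rw [hXV]
          exact goodtriple_sum hm3' hb₃ hdb₃
        · refine ⟨A v, B v, A v + B v,
            hTD v hv (by rw [hTdef]; simp [hv1, hv3]),
            hTD v hv (by rw [hTdef]; simp [hv1, hv3]),
            hTD v hv (by rw [hTdef]; simp [hv1, hv3]), ?_⟩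
          rw [hXV]
          exact goodtriple_sum (hA v hv) (hB v hv) (hAB v hv)
end
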